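/- arXiv:1601.06447 — 5 statements merged into one kernel-verified Lean document; each statement's English description precedes it below -/
import Mathlib

section
/- Let μ be a σ-finite measure on a measurable space Y, and let f₀, f₁ : Y → [0,∞) be measurable with ∫ f₀ dμ = ∫ f₁ dμ = 1 and f₀ > 0, f₁ > 0 μ-almost everywhere. Let G : [0,1] → ℝ be concave and bounded. Then the function x ↦ ∫_Y ((1−x)f₀(y) + x f₁(y)) · G( x f₁(y) / ((1−x)f₀(y) + x f₁(y)) ) dμ(y) is well defined (the integrand is integrable for every x ∈ [0,1]) and is concave on [0,1]. -/
open Set MeasureTheory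

/-- A bounded-on-`Icc` trick: the truncated version of `G` is measurable. -/
lemma aux_trunc_measurable (G : ℝ → ℝ) (hG : ConcaveOn ℝ (Icc (0:ℝ) 1) G) :
    Measurable (fun s : ℝ => if s ≤ 0 then G 0 else if 1 ≤ s then G 1 else G s) := by
  have hcont : ContinuousOn G (Ioo (0:ℝ) 1) := by
    have := hG.continuousOn_interior
    rwa [interior_Icc] at this
  apply measurable_of_restrict_of_restrict_compl (s := Ioo (0:ℝ) 1) measurableSet_Ioo
  · have : (Ioo (0:ℝ) 1).domRestrict (fun s : ℝ => if s ≤ 0 then G 0 else if 1 ≤ s then G 1 else G s)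
        = (Ioo (0:ℝ) 1).domRestrict G := by
      funext p
      have h1 : ¬ (p : ℝ) ≤ 0 := not_le.2 p.2.1
      have h2 : ¬ (1:ℝ) ≤ (p : ℝ) := not_le.2 p.2.2
      simp [Set.domRestrict, h1, h2]
    rw [this]
    exact (hcont.restrict).measurable
  · have hm : Measurable (fun s : ℝ => if s ≤ 0 then G 0 else G 1) :=
      Measurable.ite measurableSet_Iic measurable_const measurable_const
    have : (Ioo (0:ℝ) 1)ᶜ.domRestrict (fun s : ℝ => if s ≤ 0 then G 0 else if 1 ≤ s then G 1 else G s)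
        = (Ioo (0:ℝ) 1)ᶜ.domRestrict (fun s : ℝ => if s ≤ 0 then G 0 else G 1) := by
      funext p
      rcases le_or_gt (p : ℝ) 0 with h | h
      · simp [Set.domRestrict, h]
      · have h2 : (1:ℝ) ≤ (p : ℝ) := by
          by_contra h2
          exact p.2 ⟨h, not_le.1 h2⟩
        simp [Set.domRestrict, not_le.2 h, h2]
    rw [this]
    exact hm.comp measurable_subtype_coe

/-- Pointwise concavity of the perspective-type function. -/
lemma aux_pointwise (G : ℝ → ℝ) (hG : ConcaveOn ℝ (Icc (0:ℝ) 1) G)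
    {c₀ c₁ : ℝ} (h₀ : 0 < c₀) (h₁ : 0 < c₁)
    {x z a b : ℝ} (hx : x ∈ Icc (0:ℝ) 1) (hz : z ∈ Icc (0:ℝ) 1)
    (ha : 0 ≤ a) (hb : 0 ≤ b) (hab : a + b = 1) :
    a * (((1 - x) * c₀ + x * c₁) * G (x * c₁ / ((1 - x) * c₀ + x * c₁)))
      + b * (((1 - z) * c₀ + z * c₁) * G (z * c₁ / ((1 - z) * c₀ + z * c₁)))
    ≤ ((1 - (a * x + b * z)) * c₀ + (a * x + b * z) * c₁)
        * G ((a * x + b * z) * c₁ / ((1 - (a * x + b * z)) * c₀ + (a * x + b * z) * c₁)) := by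
  have dpos : ∀ u : ℝ, u ∈ Icc (0:ℝ) 1 → 0 < (1 - u) * c₀ + u * c₁ := by
    intro u hu
    rcases eq_or_lt_of_le hu.1 with h | h
    · simp [← h]; linarith
    · have : 0 < u * c₁ := mul_pos h h₁
      have : 0 ≤ (1 - u) * c₀ := mul_nonneg (by linarith [hu.2]) h₀.le
      linarith
  set dx := (1 - x) * c₀ + x * c₁ with hdx
  set dz := (1 - z) * c₀ + z * c₁ with hdz
  have hxz : a * x + b * z ∈ Icc (0:ℝ) 1 :=
    (convex_Icc (0:ℝ) 1) hx hz ha hb hab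
  set S := (1 - (a * x + b * z)) * c₀ + (a * x + b * z) * c₁ with hS
  have hdxp := dpos x hx
  have hdzp := dpos z hz
  have hSp := dpos _ hxz
  have hSsum : S = a * dx + b * dz := by
    have h1 : (1:ℝ) - (a * x + b * z) = a * (1 - x) + b * (1 - z) := by linarith
    rw [hS, hdx, hdz, h1]; ring
  -- memberships of the arguments
  have tmem : ∀ u : ℝ, u ∈ Icc (0:ℝ) 1 → u * c₁ / ((1 - u) * c₀ + u * c₁) ∈ Icc (0:ℝ) 1 := by
    intro u hu
    have hd := dpos u hu
    constructor
    · exact div_nonneg (mul_nonneg hu.1 h₁.le) hd.le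
    · rw [div_le_one hd]
      nlinarith [mul_nonneg (by linarith [hu.2] : (0:ℝ) ≤ 1 - u) h₀.le]
  have key := hG.2 (tmem x hx) (tmem z hz)
      (div_nonneg (mul_nonneg ha hdxp.le) hSp.le)
      (div_nonneg (mul_nonneg hb hdzp.le) hSp.le)
      (by rw [← add_div, ← hSsum, div_self hSp.ne'])
  have harg : (a * dx / S) • (x * c₁ / dx) + (b * dz / S) • (z * c₁ / dz)
      = (a * x + b * z) * c₁ / S := by
    simp only [smul_eq_mul]
    field_simp [show dx ≠ 0 from hdxp.ne', show dz ≠ 0 from hdzp.ne', show S ≠ 0 from hSp.ne']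
  rw [harg] at key
  have key2 := mul_le_mul_of_nonneg_left key hSp.le
  calc a * (dx * G (x * c₁ / dx)) + b * (dz * G (z * c₁ / dz))
      = S * ((a * dx / S) • G (x * c₁ / dx) + (b * dz / S) • G (z * c₁ / dz)) := by
        simp only [smul_eq_mul]; field_simp [show dx ≠ 0 from hdxp.ne', show dz ≠ 0 from hdzp.ne', show S ≠ 0 from hSp.ne']
    _ ≤ S * G ((a * x + b * z) * c₁ / S) := key2

/-- Expectation step in Lemma 3: the one-step-ahead conditional expectation of a
bounded concave cost-to-go `G` is well defined and concave in the posterior. -/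
theorem expected_cost_to_go_concave
    {Y : Type*} [MeasurableSpace Y] (μ : Measure Y) [SigmaFinite μ]
    (f₀ f₁ : Y → ℝ) (hf₀m : Measurable f₀) (hf₁m : Measurable f₁)
    (hf₀nn : ∀ y, 0 ≤ f₀ y) (hf₁nn : ∀ y, 0 ≤ f₁ y)
    (hf₀1 : ∫ y, f₀ y ∂μ = 1) (hf₁1 : ∫ y, f₁ y ∂μ = 1)
    (hf₀pos : ∀ᵐ y ∂μ, 0 < f₀ y) (hf₁pos : ∀ᵐ y ∂μ, 0 < f₁ y)
    (G : ℝ → ℝ) (hG : ConcaveOn ℝ (Icc (0:ℝ) 1) G)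
    (M : ℝ) (hGbd : ∀ x ∈ Icc (0:ℝ) 1, |G x| ≤ M) :
    (∀ x ∈ Icc (0:ℝ) 1,
      Integrable (fun y => ((1 - x) * f₀ y + x * f₁ y) *
        G (x * f₁ y / ((1 - x) * f₀ y + x * f₁ y))) μ) ∧
    ConcaveOn ℝ (Icc (0:ℝ) 1)
      (fun x => ∫ y, ((1 - x) * f₀ y + x * f₁ y) *
        G (x * f₁ y / ((1 - x) * f₀ y + x * f₁ y)) ∂μ) := by
  have hInt₀ : Integrable f₀ μ := by
    by_contra h
    rw [integral_undef h] at hf₀1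
    norm_num at hf₀1
  have hInt₁ : Integrable f₁ μ := by
    by_contra h
    rw [integral_undef h] at hf₁1
    norm_num at hf₁1
  have hM : 0 ≤ M := (abs_nonneg _).trans (hGbd 0 ⟨le_refl 0, zero_le_one⟩)
  -- t-values lie in [0,1]
  have tmem : ∀ (x : ℝ), x ∈ Icc (0:ℝ) 1 → ∀ y : Y,
      x * f₁ y / ((1 - x) * f₀ y + x * f₁ y) ∈ Icc (0:ℝ) 1 := by
    intro x hx y
    set d := (1 - x) * f₀ y + x * f₁ y with hd
    have hdnn : 0 ≤ d := add_nonneg (mul_nonneg (by linarith [hx.2]) (hf₀nn y))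
      (mul_nonneg hx.1 (hf₁nn y))
    rcases eq_or_lt_of_le hdnn with h | h
    · simp [← h]
    · constructor
      · exact div_nonneg (mul_nonneg hx.1 (hf₁nn y)) hdnn
      · rw [div_le_one h]
        nlinarith [mul_nonneg (by linarith [hx.2] : (0:ℝ) ≤ 1 - x) (hf₀nn y)]
  -- integrand integrability
  have hIntAll : ∀ x ∈ Icc (0:ℝ) 1,
      Integrable (fun y => ((1 - x) * f₀ y + x * f₁ y) *
        G (x * f₁ y / ((1 - x) * f₀ y + x * f₁ y))) μ := by
    intro x hx
    set g : ℝ → ℝ := fun s => if s ≤ 0 then G 0 else if 1 ≤ s then G 1 else G s with hg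
    have hgm : Measurable g := aux_trunc_measurable G hG
    have hgeq : ∀ s ∈ Icc (0:ℝ) 1, g s = G s := by
      intro s hs
      rcases eq_or_lt_of_le hs.1 with h | h
      · simp [hg, ← h]
      · rcases eq_or_lt_of_le hs.2 with h2 | h2
        · simp [hg, h2, not_le.2 h]
        · simp [hg, not_le.2 h, not_le.2 h2]
    have hFeq : (fun y => ((1 - x) * f₀ y + x * f₁ y) *
        G (x * f₁ y / ((1 - x) * f₀ y + x * f₁ y)))
        = (fun y => ((1 - x) * f₀ y + x * f₁ y) *
        g (x * f₁ y / ((1 - x) * f₀ y + x * f₁ y))) := by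
      funext y
      rw [hgeq _ (tmem x hx y)]
    have hdm : Measurable fun y => (1 - x) * f₀ y + x * f₁ y :=
      (hf₀m.const_mul _).add (hf₁m.const_mul _)
    have hFm : Measurable (fun y => ((1 - x) * f₀ y + x * f₁ y) *
        g (x * f₁ y / ((1 - x) * f₀ y + x * f₁ y))) :=
      hdm.mul (hgm.comp ((hf₁m.const_mul _).div hdm))
    rw [hFeq]
    apply Integrable.mono' (g := fun y => M * ((1 - x) * f₀ y + x * f₁ y))
      (((hInt₀.const_mul _).add (hInt₁.const_mul _)).const_mul M)
      hFm.aestronglyMeasurable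
    filter_upwards with y
    have hdnn : 0 ≤ (1 - x) * f₀ y + x * f₁ y :=
      add_nonneg (mul_nonneg (by linarith [hx.2]) (hf₀nn y)) (mul_nonneg hx.1 (hf₁nn y))
    rw [Real.norm_eq_abs, abs_mul, abs_of_nonneg hdnn]
    rw [hgeq _ (tmem x hx y)]
    calc ((1 - x) * f₀ y + x * f₁ y) * |G (x * f₁ y / ((1 - x) * f₀ y + x * f₁ y))|
        ≤ ((1 - x) * f₀ y + x * f₁ y) * M :=
          mul_le_mul_of_nonneg_left (hGbd _ (tmem x hx y)) hdnn
      _ = M * ((1 - x) * f₀ y + x * f₁ y) := by ring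
  refine ⟨hIntAll, (convex_Icc 0 1), ?_⟩
  intro x hx z hz a b ha hb hab
  simp only [smul_eq_mul]
  have hxz : a * x + b * z ∈ Icc (0:ℝ) 1 := (convex_Icc (0:ℝ) 1) hx hz ha hb hab
  have hIx := hIntAll x hx
  have hIz := hIntAll z hz
  have hIxz := hIntAll _ hxz
  rw [← integral_const_mul, ← integral_const_mul, ← integral_add (hIx.const_mul a) (hIz.const_mul b)]
  apply integral_mono_ae ((hIx.const_mul a).add (hIz.const_mul b)) hIxz
  filter_upwards [hf₀pos, hf₁pos] with y h₀ h₁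
  exact aux_pointwise G hG h₀ h₁ hx hz ha hb hab
end

section
/- Let μ be a σ-finite measure on a measurable space Y; for ℓ = 1,…,K let f₀^ℓ, f₁^ℓ : Y → [0,∞) be measurable probability densities with respect to μ that are strictly positive μ-a.e.; let C_ℓ > 0 be sampling costs and μ₀, μ₁ > 0 multipliers, and set φ(x) = min{μ₁ x, μ₀(1−x)} for x ∈ [0,1]. Suppose G : [0,1] → ℝ is concave, bounded, and satisfies 0 ≤ G(x) ≤ φ(x) for all x ∈ [0,1]. For each ℓ define Ḡ_ℓ(x) = C_ℓ + ∫_Y ((1−x)f₀^ℓ(y) + x f₁^ℓ(y)) · G( x f₁^ℓ(y) / ((1−x)f₀^ℓ(y) + x f₁^ℓ(y)) ) dμ(y), and let G̃(x) = min_{1≤ℓ≤K} Ḡ_ℓ(x). Then: (i) each Ḡ_ℓ is concave on [0,1]; (ii) G̃ is concave on [0,1]; (iii) G̃(0) > 0 and G̃(1) > 0; and (iv) the updated value function x ↦ min{φ(x), G̃(x)} is concave on [0,1]. -/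
open Set MeasureTheory

/-- A concave function on `[0,1]` agrees on `[0,1]` with a globally measurable function. -/
lemma aux_meas_ext (G : ℝ → ℝ) (hG : ConcaveOn ℝ (Icc (0:ℝ) 1) G) :
    ∃ G' : ℝ → ℝ, Measurable G' ∧ ∀ t ∈ Icc (0:ℝ) 1, G' t = G t := by
  have hcont : ContinuousOn G (Ioo 0 1) := by
    simpa [interior_Icc] using hG.continuousOn_interior
  have hres : Measurable ((Ioo (0:ℝ) 1).restrict G) :=
    (continuousOn_iff_continuous_restrict.mp hcont).measurable
  obtain ⟨G₀, hG₀m, hG₀⟩ :=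
    (MeasurableEmbedding.subtype_coe measurableSet_Ioo).exists_measurable_extend hres
      (fun _ => ⟨0⟩)
  refine ⟨fun t => if t = 0 then G 0 else if t = 1 then G 1 else G₀ t, ?_, ?_⟩
  · exact Measurable.ite (measurableSet_singleton 0) measurable_const
      (Measurable.ite (measurableSet_singleton 1) measurable_const hG₀m)
  · intro t ht
    rcases eq_or_ne t 0 with rfl | h0
    · simp
    rcases eq_or_ne t 1 with rfl | h1
    · simp
    have htm : t ∈ Ioo (0:ℝ) 1 := ⟨lt_of_le_of_ne ht.1 (Ne.symm h0), lt_of_le_of_ne ht.2 h1⟩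
    simp only [if_neg h0, if_neg h1]
    have := congrFun hG₀ (⟨t, htm⟩ : Ioo (0:ℝ) 1)
    exact this

/-- Pointwise concavity of the Bayes-update integrand (perspective transform). -/
lemma aux_persp (G : ℝ → ℝ) (hG : ConcaveOn ℝ (Icc (0:ℝ) 1) G) (a b : ℝ)
    (ha : 0 ≤ a) (hb : 0 ≤ b) :
    ConcaveOn ℝ (Icc (0:ℝ) 1)
      (fun x => ((1 - x) * a + x * b) * G (x * b / ((1 - x) * a + x * b))) := by
  refine ⟨convex_Icc 0 1, ?_⟩
  intro x hx y hy s t hs ht hst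
  simp only [smul_eq_mul]
  set d1 := (1 - x) * a + x * b with hd1
  set d2 := (1 - y) * a + y * b with hd2
  have hd1n : 0 ≤ d1 := add_nonneg (mul_nonneg (by linarith [hx.2]) ha) (mul_nonneg hx.1 hb)
  have hd2n : 0 ≤ d2 := add_nonneg (mul_nonneg (by linarith [hy.2]) ha) (mul_nonneg hy.1 hb)
  have hxb : 0 ≤ x * b := mul_nonneg hx.1 hb
  have hyb : 0 ≤ y * b := mul_nonneg hy.1 hb
  have hxbd : x * b ≤ d1 := by
    have : 0 ≤ (1 - x) * a := mul_nonneg (by linarith [hx.2]) ha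
    simp only [hd1]; linarith
  have hybd : y * b ≤ d2 := by
    have : 0 ≤ (1 - y) * a := mul_nonneg (by linarith [hy.2]) ha
    simp only [hd2]; linarith
  set u1 := x * b / d1 with hu1d
  set u2 := y * b / d2 with hu2d
  have hu1 : u1 ∈ Icc (0:ℝ) 1 := ⟨div_nonneg hxb hd1n, div_le_one_of_le₀ hxbd hd1n⟩
  have hu2 : u2 ∈ Icc (0:ℝ) 1 := ⟨div_nonneg hyb hd2n, div_le_one_of_le₀ hybd hd2n⟩
  have key1 : x * b = d1 * u1 := by
    rcases eq_or_lt_of_le hd1n with h | h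
    · have hz : x * b = 0 := le_antisymm (h ▸ hxbd) hxb
      simp [hu1d, hz, ← h]
    · rw [hu1d, mul_div_cancel₀ _ (ne_of_gt h)]
  have key2 : y * b = d2 * u2 := by
    rcases eq_or_lt_of_le hd2n with h | h
    · have hz : y * b = 0 := le_antisymm (h ▸ hybd) hyb
      simp [hu2d, hz, ← h]
    · rw [hu2d, mul_div_cancel₀ _ (ne_of_gt h)]
  have hD : (1 - (s * x + t * y)) * a + (s * x + t * y) * b = s * d1 + t * d2 := by
    simp only [hd1, hd2]; linear_combination (-a) * hst
  rw [hD]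
  have hDn : 0 ≤ s * d1 + t * d2 := add_nonneg (mul_nonneg hs hd1n) (mul_nonneg ht hd2n)
  rcases eq_or_lt_of_le hDn with hD0 | hDpos
  · -- degenerate: total mass zero
    have h1 : s * d1 = 0 := by nlinarith [mul_nonneg hs hd1n, mul_nonneg ht hd2n]
    have h2 : t * d2 = 0 := by nlinarith [mul_nonneg hs hd1n, mul_nonneg ht hd2n]
    rw [← hD0]
    have e1 : s * (d1 * G u1) = 0 := by rw [← mul_assoc, h1, zero_mul]
    have e2 : t * (d2 * G u2) = 0 := by rw [← mul_assoc, h2, zero_mul]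
    simp [e1, e2]
  · set D := s * d1 + t * d2 with hDdef
    have hDne : D ≠ 0 := ne_of_gt hDpos
    set w := s * d1 / D with hw
    have hw0 : 0 ≤ w := div_nonneg (mul_nonneg hs hd1n) hDn
    have hw0' : 0 ≤ 1 - w := by
      have : w ≤ 1 := div_le_one_of_le₀ (by simp only [hDdef]; nlinarith [mul_nonneg ht hd2n]) hDn
      linarith
    have hww : w + (1 - w) = 1 := by ring
    have hsum : w + t * d2 / D = 1 := by
      rw [hw, ← add_div, ← hDdef, div_self hDne]
    have h1w : 1 - w = t * d2 / D := by linarith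
    have hDw : D * w = s * d1 := by
      rw [hw, mul_comm]; exact div_mul_cancel₀ _ hDne
    have hDw' : D * (1 - w) = t * d2 := by
      rw [h1w, mul_comm]; exact div_mul_cancel₀ _ hDne
    have harg : (s * x + t * y) * b / D = w * u1 + (1 - w) * u2 := by
      have hnum : (s * x + t * y) * b = s * (d1 * u1) + t * (d2 * u2) := by
        linear_combination s * key1 + t * key2
      rw [hnum, hw, h1w, div_mul_eq_mul_div, div_mul_eq_mul_div, ← add_div]
      congr 1; ring
    rw [harg]
    have hGc := hG.2 hu1 hu2 hw0 hw0' hww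
    simp only [smul_eq_mul] at hGc
    have hmul := mul_le_mul_of_nonneg_left hGc (le_of_lt hDpos)
    calc s * (d1 * G u1) + t * (d2 * G u2)
        = D * (w * G u1 + (1 - w) * G u2) := by
          linear_combination (-(G u1)) * hDw + (-(G u2)) * hDw'
      _ ≤ D * G (w * u1 + (1 - w) * u2) := hmul

/-- Lemma 3 of the paper: concavity of the one-step-ahead costs `Ḡ_ℓ`, of their
minimum `G̃`, positivity of `G̃` at the endpoints, and concavity of the updated
value function `min{φ, G̃}`. -/
theorem lemma3_backward_recursion_concavity
    {Y : Type*} [MeasurableSpace Y] (μ : Measure Y) [SigmaFinite μ]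
    (K : ℕ) (hK : 0 < K)
    (f₀ f₁ : Fin K → Y → ℝ)
    (hm0 : ∀ ℓ, Measurable (f₀ ℓ)) (hm1 : ∀ ℓ, Measurable (f₁ ℓ))
    (h0nn : ∀ ℓ y, 0 ≤ f₀ ℓ y) (h1nn : ∀ ℓ y, 0 ≤ f₁ ℓ y)
    (h0int : ∀ ℓ, ∫ y, f₀ ℓ y ∂μ = 1) (h1int : ∀ ℓ, ∫ y, f₁ ℓ y ∂μ = 1)
    (h0pos : ∀ ℓ, ∀ᵐ y ∂μ, 0 < f₀ ℓ y) (h1pos : ∀ ℓ, ∀ᵐ y ∂μ, 0 < f₁ ℓ y)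
    (C : Fin K → ℝ) (hC : ∀ ℓ, 0 < C ℓ)
    (μ₀ μ₁ : ℝ) (hμ₀ : 0 < μ₀) (hμ₁ : 0 < μ₁)
    (φ : ℝ → ℝ) (hφ : ∀ x, φ x = min (μ₁ * x) (μ₀ * (1 - x)))
    (G : ℝ → ℝ) (hG : ConcaveOn ℝ (Icc (0:ℝ) 1) G)
    (M : ℝ) (hGbd : ∀ x ∈ Icc (0:ℝ) 1, |G x| ≤ M)
    (hGrange : ∀ x ∈ Icc (0:ℝ) 1, 0 ≤ G x ∧ G x ≤ φ x)
    (Gbar : Fin K → ℝ → ℝ)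
    (hGbar : ∀ ℓ x, Gbar ℓ x = C ℓ + ∫ y, ((1 - x) * f₀ ℓ y + x * f₁ ℓ y) *
        G (x * f₁ ℓ y / ((1 - x) * f₀ ℓ y + x * f₁ ℓ y)) ∂μ)
    (Gtilde : ℝ → ℝ)
    (hGtilde : ∀ x, Gtilde x =
      Finset.univ.inf' (Finset.univ_nonempty_iff.mpr (Fin.pos_iff_nonempty.mp hK))
        (fun ℓ => Gbar ℓ x)) :
    (∀ ℓ, ConcaveOn ℝ (Icc (0:ℝ) 1) (Gbar ℓ)) ∧
    ConcaveOn ℝ (Icc (0:ℝ) 1) Gtilde ∧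
    0 < Gtilde 0 ∧ 0 < Gtilde 1 ∧
    ConcaveOn ℝ (Icc (0:ℝ) 1) (fun x => min (φ x) (Gtilde x)) := by
  -- endpoint values of G
  have hG0 : G 0 = 0 := by
    have h := hGrange 0 (by norm_num)
    have hφ0 : φ 0 = 0 := by rw [hφ]; simp; positivity
    rw [hφ0] at h; linarith [h.1, h.2]
  have hG1 : G 1 = 0 := by
    have h := hGrange 1 (by norm_num)
    have hφ1 : φ 1 = 0 := by rw [hφ]; simp; positivity
    rw [hφ1] at h; linarith [h.1, h.2]
  -- measurable extension of G
  obtain ⟨G', hG'm, hG'eq⟩ := aux_meas_ext G hG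
  -- integrability of the densities
  have hint0 : ∀ ℓ, Integrable (f₀ ℓ) μ := by
    intro ℓ; by_contra h
    have := h0int ℓ
    rw [integral_undef h] at this
    exact one_ne_zero this.symm
  have hint1 : ∀ ℓ, Integrable (f₁ ℓ) μ := by
    intro ℓ; by_contra h
    have := h1int ℓ
    rw [integral_undef h] at this
    exact one_ne_zero this.symm
  -- the posterior argument always lies in [0,1]
  have harg : ∀ (x : ℝ), x ∈ Icc (0:ℝ) 1 → ∀ ℓ (y : Y),
      x * f₁ ℓ y / ((1 - x) * f₀ ℓ y + x * f₁ ℓ y) ∈ Icc (0:ℝ) 1 := by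
    intro x hx ℓ y
    have h1 : 0 ≤ x * f₁ ℓ y := mul_nonneg hx.1 (h1nn ℓ y)
    have h2 : 0 ≤ (1 - x) * f₀ ℓ y := mul_nonneg (by linarith [hx.2]) (h0nn ℓ y)
    have h3 : 0 ≤ (1 - x) * f₀ ℓ y + x * f₁ ℓ y := by linarith
    exact ⟨div_nonneg h1 h3, div_le_one_of_le₀ (by linarith) h3⟩
  have hMnn : 0 ≤ M := le_trans (abs_nonneg _) (hGbd 0 (by norm_num))
  -- integrability of the integrand, uniformly for x ∈ [0,1]
  have hintble : ∀ ℓ, ∀ x ∈ Icc (0:ℝ) 1,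
      Integrable (fun y => ((1 - x) * f₀ ℓ y + x * f₁ ℓ y) *
        G (x * f₁ ℓ y / ((1 - x) * f₀ ℓ y + x * f₁ ℓ y))) μ := by
    intro ℓ x hx
    have heq : (fun y => ((1 - x) * f₀ ℓ y + x * f₁ ℓ y) *
        G (x * f₁ ℓ y / ((1 - x) * f₀ ℓ y + x * f₁ ℓ y)))
        = fun y => ((1 - x) * f₀ ℓ y + x * f₁ ℓ y) *
        G' (x * f₁ ℓ y / ((1 - x) * f₀ ℓ y + x * f₁ ℓ y)) := by
      funext y; rw [hG'eq _ (harg x hx ℓ y)]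
    rw [heq]
    have hmd : Measurable (fun y => (1 - x) * f₀ ℓ y + x * f₁ ℓ y) :=
      ((hm0 ℓ).const_mul _).add ((hm1 ℓ).const_mul _)
    have hma : Measurable (fun y => x * f₁ ℓ y / ((1 - x) * f₀ ℓ y + x * f₁ ℓ y)) :=
      ((hm1 ℓ).const_mul _).div hmd
    have hmI : Measurable (fun y => ((1 - x) * f₀ ℓ y + x * f₁ ℓ y) *
        G' (x * f₁ ℓ y / ((1 - x) * f₀ ℓ y + x * f₁ ℓ y))) :=
      hmd.mul (hG'm.comp hma)
    have hbd : Integrable (fun y => M * ((1 - x) * f₀ ℓ y + x * f₁ ℓ y)) μ :=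
      (((hint0 ℓ).const_mul _).add ((hint1 ℓ).const_mul _)).const_mul M
    refine hbd.mono' hmI.aestronglyMeasurable ?_
    filter_upwards with y
    have hdnn : 0 ≤ (1 - x) * f₀ ℓ y + x * f₁ ℓ y :=
      add_nonneg (mul_nonneg (by linarith [hx.2]) (h0nn ℓ y)) (mul_nonneg hx.1 (h1nn ℓ y))
    have hGb : |G' (x * f₁ ℓ y / ((1 - x) * f₀ ℓ y + x * f₁ ℓ y))| ≤ M := by
      rw [hG'eq _ (harg x hx ℓ y)]; exact hGbd _ (harg x hx ℓ y)
    rw [Real.norm_eq_abs, abs_mul, abs_of_nonneg hdnn]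
    calc ((1 - x) * f₀ ℓ y + x * f₁ ℓ y) * |G' _|
        ≤ ((1 - x) * f₀ ℓ y + x * f₁ ℓ y) * M := mul_le_mul_of_nonneg_left hGb hdnn
      _ = M * ((1 - x) * f₀ ℓ y + x * f₁ ℓ y) := mul_comm _ _
  -- (i) each Gbar ℓ is concave
  have hGbarConc : ∀ ℓ, ConcaveOn ℝ (Icc (0:ℝ) 1) (Gbar ℓ) := by
    intro ℓ
    refine ⟨convex_Icc 0 1, ?_⟩
    intro x hx y hy s t hs ht hst
    have hmem : s • x + t • y ∈ Icc (0:ℝ) 1 := (convex_Icc 0 1) hx hy hs ht hst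
    simp only [smul_eq_mul] at hmem ⊢
    rw [hGbar, hGbar, hGbar]
    have hpt : ∀ y' : Y,
        s * (((1 - x) * f₀ ℓ y' + x * f₁ ℓ y') *
          G (x * f₁ ℓ y' / ((1 - x) * f₀ ℓ y' + x * f₁ ℓ y'))) +
        t * (((1 - y) * f₀ ℓ y' + y * f₁ ℓ y') *
          G (y * f₁ ℓ y' / ((1 - y) * f₀ ℓ y' + y * f₁ ℓ y')))
        ≤ ((1 - (s * x + t * y)) * f₀ ℓ y' + (s * x + t * y) * f₁ ℓ y') *
          G ((s * x + t * y) * f₁ ℓ y' /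
            ((1 - (s * x + t * y)) * f₀ ℓ y' + (s * x + t * y) * f₁ ℓ y')) := by
      intro y'
      have := (aux_persp G hG (f₀ ℓ y') (f₁ ℓ y') (h0nn ℓ y') (h1nn ℓ y')).2
        hx hy hs ht hst
      simpa only [smul_eq_mul] using this
    have hI1 := hintble ℓ x hx
    have hI2 := hintble ℓ y hy
    have hI3 := hintble ℓ _ hmem
    have hmono : ∫ y', (s * (((1 - x) * f₀ ℓ y' + x * f₁ ℓ y') *
          G (x * f₁ ℓ y' / ((1 - x) * f₀ ℓ y' + x * f₁ ℓ y'))) +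
        t * (((1 - y) * f₀ ℓ y' + y * f₁ ℓ y') *
          G (y * f₁ ℓ y' / ((1 - y) * f₀ ℓ y' + y * f₁ ℓ y')))) ∂μ
        ≤ ∫ y', ((1 - (s * x + t * y)) * f₀ ℓ y' + (s * x + t * y) * f₁ ℓ y') *
          G ((s * x + t * y) * f₁ ℓ y' /
            ((1 - (s * x + t * y)) * f₀ ℓ y' + (s * x + t * y) * f₁ ℓ y')) ∂μ :=
      integral_mono ((hI1.const_mul s).add (hI2.const_mul t)) hI3 fun y' => hpt y'
    rw [integral_add (hI1.const_mul s) (hI2.const_mul t)] at hmono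
    simp only [← smul_eq_mul, integral_smul] at hmono
    simp only [smul_eq_mul] at hmono
    have hCC : s * C ℓ + t * C ℓ = C ℓ := by linear_combination (C ℓ) * hst
    linarith [hmono]
  -- endpoint values of Gbar
  have hend0 : ∀ ℓ, Gbar ℓ 0 = C ℓ := by
    intro ℓ
    rw [hGbar]
    have : (fun y => ((1 - (0:ℝ)) * f₀ ℓ y + 0 * f₁ ℓ y) *
        G (0 * f₁ ℓ y / ((1 - (0:ℝ)) * f₀ ℓ y + 0 * f₁ ℓ y))) = fun _ => (0:ℝ) := by
      funext y; simp [hG0]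
    rw [this, integral_zero, add_zero]
  have hend1 : ∀ ℓ, Gbar ℓ 1 = C ℓ := by
    intro ℓ
    rw [hGbar]
    have : (fun y => ((1 - (1:ℝ)) * f₀ ℓ y + 1 * f₁ ℓ y) *
        G (1 * f₁ ℓ y / ((1 - (1:ℝ)) * f₀ ℓ y + 1 * f₁ ℓ y))) = fun _ => (0:ℝ) := by
      funext y
      rcases eq_or_ne (f₁ ℓ y) 0 with h | h
      · simp [h]
      · simp [div_self h, hG1]
    rw [this, integral_zero, add_zero]
  -- (ii) Gtilde is concave
  have hGtc : ConcaveOn ℝ (Icc (0:ℝ) 1) Gtilde := by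
    refine ⟨convex_Icc 0 1, ?_⟩
    intro x hx y hy s t hs ht hst
    rw [hGtilde (s • x + t • y)]
    refine Finset.le_inf' _ _ fun ℓ _ => ?_
    have h1 : Gtilde x ≤ Gbar ℓ x := by
      rw [hGtilde]; exact Finset.inf'_le _ (Finset.mem_univ ℓ)
    have h2 : Gtilde y ≤ Gbar ℓ y := by
      rw [hGtilde]; exact Finset.inf'_le _ (Finset.mem_univ ℓ)
    calc s • Gtilde x + t • Gtilde y
        ≤ s • Gbar ℓ x + t • Gbar ℓ y := by
          simp only [smul_eq_mul]
          gcongr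
      _ ≤ Gbar ℓ (s • x + t • y) := (hGbarConc ℓ).2 hx hy hs ht hst
  -- (iii) positivity at endpoints
  have hGt0 : 0 < Gtilde 0 := by
    rw [hGtilde, Finset.lt_inf'_iff]
    intro ℓ _
    rw [hend0]; exact hC ℓ
  have hGt1 : 0 < Gtilde 1 := by
    rw [hGtilde, Finset.lt_inf'_iff]
    intro ℓ _
    rw [hend1]; exact hC ℓ
  -- (iv) concavity of min φ Gtilde
  have hφc : ConcaveOn ℝ (Icc (0:ℝ) 1) φ := by
    have h1 : ConcaveOn ℝ (Icc (0:ℝ) 1) (fun x : ℝ => μ₁ * x) := by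
      refine ⟨convex_Icc 0 1, ?_⟩
      intro x hx y hy s t hs ht hst
      simp only [smul_eq_mul]
      apply le_of_eq; ring
    have h2 : ConcaveOn ℝ (Icc (0:ℝ) 1) (fun x : ℝ => μ₀ * (1 - x)) := by
      refine ⟨convex_Icc 0 1, ?_⟩
      intro x hx y hy s t hs ht hst
      simp only [smul_eq_mul]
      apply le_of_eq; linear_combination μ₀ * hst
    have := h1.inf h2
    refine this.congr ?_
    intro x _
    rw [hφ]; rfl
  have hminc : ConcaveOn ℝ (Icc (0:ℝ) 1) (fun x => min (φ x) (Gtilde x)) := by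
    have := hφc.inf hGtc
    refine this.congr fun x _ => rfl
  exact ⟨hGbarConc, hGtc, hGt0, hGt1, hminc⟩
end

section
/- Let h : [0,1] → ℝ be concave with h(0) > 0 and h(1) > 0, and let μ₀, μ₁ > 0. Then the set C = { x ∈ [0,1] : h(x) < μ₁ x and h(x) < μ₀ (1−x) } is convex (an interval), and C ⊆ (0,1). -/
open Set

/-- If `h` is concave on `[0,1]` with `h 0 > 0`, `h x < μ₁ x` for some `x < z`,
then `h z < μ₁ z`. -/
lemma claimA (h : ℝ → ℝ) (hconc : ConcaveOn ℝ (Icc (0:ℝ) 1) h)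
    (h0 : 0 < h 0) (μ₁ : ℝ)
    {x z : ℝ} (hx0 : 0 ≤ x) (hxz : x < z) (hz1 : z ≤ 1)
    (hhz : μ₁ * z ≤ h z) (hhx : h x < μ₁ * x) : False := by
  have hzpos : 0 < z := lt_of_le_of_lt hx0 hxz
  set t := (z - x) / z with ht
  set s := x / z with hs
  have hts : t + s = 1 := by rw [ht, hs, ← add_div, sub_add_cancel, div_self hzpos.ne']
  have htpos : 0 < t := div_pos (by linarith) hzpos
  have hsnn : 0 ≤ s := div_nonneg hx0 hzpos.le
  have hsz : s * z = x := by rw [hs]; field_simp [hzpos.ne']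
  have hcomb : t • (0:ℝ) + s • z = x := by
    simp [smul_eq_mul, hsz]
  have hkey := hconc.2 (x := (0:ℝ)) (y := z)
    ⟨le_refl _, zero_le_one⟩ ⟨hzpos.le, hz1⟩ htpos.le hsnn hts
  rw [hcomb] at hkey
  have : t * h 0 + s * h z ≤ h x := by simpa [smul_eq_mul] using hkey
  have h2 : s * (μ₁ * z) ≤ s * h z := mul_le_mul_of_nonneg_left hhz hsnn
  have h3 : s * (μ₁ * z) = μ₁ * x := by rw [mul_comm μ₁ z, ← mul_assoc, hsz, mul_comm]
  nlinarith

lemma claimB (h : ℝ → ℝ) (hconc : ConcaveOn ℝ (Icc (0:ℝ) 1) h)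
    (h1 : 0 < h 1) (μ₀ : ℝ)
    {z y : ℝ} (hz0 : 0 ≤ z) (hzy : z < y) (hy1 : y ≤ 1)
    (hhz : μ₀ * (1 - z) ≤ h z) (hhy : h y < μ₀ * (1 - y)) : False := by
  have hz1 : z < 1 := lt_of_lt_of_le hzy hy1
  set t := (1 - y) / (1 - z) with ht
  set s := (y - z) / (1 - z) with hs
  have hne : (1:ℝ) - z ≠ 0 := sub_ne_zero.mpr hz1.ne'
  have hts : t + s = 1 := by rw [ht, hs]; field_simp [hne]; ring
  have htnn : 0 ≤ t := div_nonneg (by linarith) (by linarith)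
  have hspos : 0 < s := div_pos (by linarith) (by linarith)
  have htz : t * (1 - z) = 1 - y := by rw [ht]; field_simp [hne]
  have hcomb : t • z + s • (1:ℝ) = y := by
    simp only [smul_eq_mul, mul_one]
    rw [ht, hs]; field_simp [hne]; ring
  have hkey := hconc.2 (x := z) (y := (1:ℝ))
    ⟨hz0, hz1.le⟩ ⟨zero_le_one, le_refl _⟩ htnn hspos.le hts
  rw [hcomb] at hkey
  have : t * h z + s * h 1 ≤ h y := by simpa [smul_eq_mul] using hkey
  have h2 : t * (μ₀ * (1 - z)) ≤ t * h z := mul_le_mul_of_nonneg_left hhz htnn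
  have h3 : t * (μ₀ * (1 - z)) = μ₀ * (1 - y) := by
    rw [mul_comm μ₀ (1 - z), ← mul_assoc, htz, mul_comm]
  nlinarith

/-- Lemma 4 of the paper (structure): the continuation region, where the concave
continuation cost `h` is strictly below both stopping costs, is a convex subset
of `[0,1]` contained in the open interval `(0,1)`. -/
theorem continuation_region_interval
    (h : ℝ → ℝ) (hconc : ConcaveOn ℝ (Icc (0:ℝ) 1) h)
    (h0 : 0 < h 0) (h1 : 0 < h 1)
    (μ₀ μ₁ : ℝ) (hμ₀ : 0 < μ₀) (hμ₁ : 0 < μ₁) :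
    Convex ℝ {x ∈ Icc (0:ℝ) 1 | h x < μ₁ * x ∧ h x < μ₀ * (1 - x)} ∧
    {x ∈ Icc (0:ℝ) 1 | h x < μ₁ * x ∧ h x < μ₀ * (1 - x)} ⊆ Ioo (0:ℝ) 1 := by
  constructor
  · intro x hx y hy a b ha hb hab
    obtain ⟨hxI, hx1, hx2⟩ := hx
    obtain ⟨hyI, hy1, hy2⟩ := hy
    set z := a • x + b • y with hz
    have hzm : z = a * x + b * y := by simp [hz, smul_eq_mul]
    have hzI : z ∈ Icc (0:ℝ) 1 := (convex_Icc (0:ℝ) 1) hxI hyI ha hb hab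
    -- z lies between min and max of x, y
    have hmin : min x y ≤ z := by
      rcases le_total x y with hxy | hxy
      · have : x ≤ z := by nlinarith [mul_nonneg hb (sub_nonneg.mpr hxy)]
        exact le_trans (min_le_left x y) this
      · have : y ≤ z := by nlinarith [mul_nonneg ha (sub_nonneg.mpr hxy)]
        exact le_trans (min_le_right x y) this
    have hmax : z ≤ max x y := by
      rcases le_total x y with hxy | hxy
      · have : z ≤ y := by nlinarith [mul_nonneg ha (sub_nonneg.mpr hxy)]
        exact le_trans this (le_max_right x y)
      · have : z ≤ x := by nlinarith [mul_nonneg hb (sub_nonneg.mpr hxy)]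
        exact le_trans this (le_max_left x y)
    refine ⟨hzI, ?_, ?_⟩
    · -- h z < μ₁ * z
      by_contra hcon
      push_neg at hcon
      -- use the point w = min x y ≤ z, which is in C
      rcases le_total x y with hxy | hxy
      · have hwz : x ≤ z := le_trans (by simp [min_eq_left hxy]) hmin
        rcases eq_or_lt_of_le hwz with heq | hlt
        · rw [← heq] at hcon; linarith
        · exact absurd hx1 (not_lt.mpr (by
            exact absurd (claimA h hconc h0 μ₁ hxI.1 hlt hzI.2 hcon hx1) not_false))
      · have hwz : y ≤ z := le_trans (by simp [min_eq_right hxy]) hmin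
        rcases eq_or_lt_of_le hwz with heq | hlt
        · rw [← heq] at hcon; linarith
        · exact absurd (claimA h hconc h0 μ₁ hyI.1 hlt hzI.2 hcon hy1) not_false
    · -- h z < μ₀ * (1 - z)
      by_contra hcon
      push_neg at hcon
      rcases le_total x y with hxy | hxy
      · have hwz : z ≤ y := le_trans hmax (by simp [max_eq_right hxy])
        rcases eq_or_lt_of_le hwz with heq | hlt
        · rw [heq] at hcon; linarith
        · exact absurd (claimB h hconc h1 μ₀ hzI.1 hlt hyI.2 hcon hy2) not_false
      · have hwz : z ≤ x := le_trans hmax (by simp [max_eq_left hxy])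
        rcases eq_or_lt_of_le hwz with heq | hlt
        · rw [heq] at hcon; linarith
        · exact absurd (claimB h hconc h1 μ₀ hzI.1 hlt hxI.2 hcon hx2) not_false
  · rintro x ⟨⟨hx0, hx1⟩, hA, hB⟩
    constructor
    · rcases eq_or_lt_of_le hx0 with heq | h'
      · exfalso; rw [← heq] at hA; simp at hA; linarith
      · exact h'
    · rcases eq_or_lt_of_le hx1 with heq | h'
      · exfalso; rw [heq] at hB; simp at hB; linarith
      · exact h'
end

section
/- Let μ be a σ-finite measure on a measurable space Y; for ℓ = 1,…,K let f₀^ℓ, f₁^ℓ : Y → [0,∞) be measurable probability densities with respect to μ that are strictly positive μ-a.e.; let C_ℓ > 0 and μ₀, μ₁ > 0, and set φ(x) = min{μ₁ x, μ₀(1−x)} for x ∈ [0,1]. For a bounded measurable G : [0,1] → ℝ define the Bellman operator (B G)(x) = min{ φ(x), min_{1≤ℓ≤K} [ C_ℓ + ∫_Y ((1−x)f₀^ℓ(y) + x f₁^ℓ(y)) · G( x f₁^ℓ(y) / ((1−x)f₀^ℓ(y) + x f₁^ℓ(y)) ) dμ(y) ] }. Define G₀ = φ and G_{n+1} = B Gₙ.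 Then for every n ≥ 0: Gₙ is concave on [0,1]; 0 ≤ Gₙ(x) ≤ φ(x) for all x ∈ [0,1]; and G_{n+1}(x) ≤ Gₙ(x) for all x ∈ [0,1]. -/
open Set MeasureTheory Filter Topology

private lemma aux_arg_mem {x f0 f1 : ℝ} (hx0 : 0 ≤ x) (hx1 : x ≤ 1)
    (h0 : 0 ≤ f0) (h1 : 0 ≤ f1) :
    x * f1 / ((1 - x) * f0 + x * f1) ∈ Icc (0:ℝ) 1 := by
  have hw : 0 ≤ (1 - x) * f0 + x * f1 :=
    add_nonneg (mul_nonneg (by linarith) h0) (mul_nonneg hx0 h1)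
  rcases eq_or_lt_of_le hw with h | h
  · have h1' : x * f1 = 0 := by
      have h2 : 0 ≤ (1 - x) * f0 := mul_nonneg (by linarith) h0
      have h3 : 0 ≤ x * f1 := mul_nonneg hx0 h1
      linarith
    rw [h1']
    simp
  · constructor
    · exact div_nonneg (mul_nonneg hx0 h1) hw
    · rw [div_le_one h]
      have : 0 ≤ (1 - x) * f0 := mul_nonneg (by linarith) h0
      linarith

private lemma aux_wpos {z f0 f1 : ℝ} (hz0 : 0 ≤ z) (hz1 : z ≤ 1)
    (h0 : 0 < f0) (h1 : 0 < f1) : 0 < (1 - z) * f0 + z * f1 := by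
  rcases eq_or_lt_of_le hz1 with h | h
  · subst h; simpa using h1
  · exact add_pos_of_pos_of_nonneg (mul_pos (by linarith) h0) (mul_nonneg hz0 h1.le)

private lemma aux_pointwise_s4 {G : ℝ → ℝ} (hG : ConcaveOn ℝ (Icc (0:ℝ) 1) G)
    (hG0 : G 0 = 0) (hG1 : G 1 = 0)
    {a b t s f0 f1 : ℝ} (ha : a ∈ Icc (0:ℝ) 1) (hb : b ∈ Icc (0:ℝ) 1)
    (ht : 0 ≤ t) (hs : 0 ≤ s) (hts : t + s = 1)
    (h0 : 0 ≤ f0) (h1 : 0 ≤ f1) :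
    t * (((1 - a) * f0 + a * f1) * G (a * f1 / ((1 - a) * f0 + a * f1))) +
      s * (((1 - b) * f0 + b * f1) * G (b * f1 / ((1 - b) * f0 + b * f1))) ≤
    ((1 - (t * a + s * b)) * f0 + (t * a + s * b) * f1) *
      G ((t * a + s * b) * f1 / ((1 - (t * a + s * b)) * f0 + (t * a + s * b) * f1)) := by
  have hx0 : 0 ≤ t * a + s * b := add_nonneg (mul_nonneg ht ha.1) (mul_nonneg hs hb.1)
  have hx1 : t * a + s * b ≤ 1 := by nlinarith [mul_nonneg ht (sub_nonneg.2 ha.2), mul_nonneg hs (sub_nonneg.2 hb.2)]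
  rcases eq_or_lt_of_le h1 with hf1 | hf1
  · -- f1 = 0
    subst hf1
    simp [hG0]
  rcases eq_or_lt_of_le h0 with hf0 | hf0
  · -- f0 = 0
    subst hf0
    simp only [mul_zero, zero_add]
    have key : ∀ z : ℝ, 0 ≤ z → z * f1 * G (z * f1 / (z * f1)) = 0 := by
      intro z hz
      rcases eq_or_lt_of_le hz with h | h
      · rw [← h]; simp
      · have hzf : 0 < z * f1 := mul_pos h hf1
        rw [div_self hzf.ne', hG1, mul_zero]
    rw [key a ha.1, key b hb.1, key _ hx0]
    norm_num
  · -- main case: f0 > 0, f1 > 0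
    set x := t * a + s * b with hxdef
    have hwa := aux_wpos ha.1 ha.2 hf0 hf1
    have hwb := aux_wpos hb.1 hb.2 hf0 hf1
    have hwx := aux_wpos hx0 hx1 hf0 hf1
    set wa := (1 - a) * f0 + a * f1 with hwadef
    set wb := (1 - b) * f0 + b * f1 with hwbdef
    set wx := (1 - x) * f0 + x * f1 with hwxdef
    have hsum : wx = t * wa + s * wb := by
      rw [hwadef, hwbdef, hwxdef, hxdef]
      linear_combination (-f0) * hts
    have hlam0 : 0 ≤ t * wa / wx := div_nonneg (mul_nonneg ht hwa.le) hwx.le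
    have hlam1 : t * wa / wx ≤ 1 := by
      rw [div_le_one hwx]
      nlinarith [mul_nonneg hs hwb.le]
    have hAa : a * f1 / wa ∈ Icc (0:ℝ) 1 := aux_arg_mem ha.1 ha.2 hf0.le hf1.le
    have hAb : b * f1 / wb ∈ Icc (0:ℝ) 1 := aux_arg_mem hb.1 hb.2 hf0.le hf1.le
    have hconc := hG.2 hAa hAb hlam0 (by linarith : (0:ℝ) ≤ 1 - t * wa / wx) (by ring)
    simp only [smul_eq_mul] at hconc
    have h1m : 1 - t * wa / wx = s * wb / wx := by
      field_simp
      linarith [hsum]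
    have hcomb : (t * wa / wx) * (a * f1 / wa) + (1 - t * wa / wx) * (b * f1 / wb) = x * f1 / wx := by
      rw [h1m, hxdef]
      field_simp
    rw [hcomb] at hconc
    have hmul := mul_le_mul_of_nonneg_left hconc hwx.le
    have e1 : wx * (t * wa / wx) = t * wa := by field_simp
    have e2 : wx * (1 - t * wa / wx) = s * wb := by
      rw [h1m]; field_simp
    have ekey : t * (wa * G (a * f1 / wa)) + s * (wb * G (b * f1 / wb)) =
        wx * ((t * wa / wx) * G (a * f1 / wa) + (1 - t * wa / wx) * G (b * f1 / wb)) := by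
      linear_combination (G (a * f1 / wa)) * e1.symm + (G (b * f1 / wb)) * e2.symm
    rw [ekey]
    calc wx * ((t * wa / wx) * G (a * f1 / wa) + (1 - t * wa / wx) * G (b * f1 / wb))
        ≤ wx * G (x * f1 / wx) := hmul
private lemma aux_arg_mem' {x f0 f1 : ℝ} (hx0 : 0 ≤ x) (hx1 : x ≤ 1)
    (h0 : 0 ≤ f0) (h1 : 0 ≤ f1) :
    x * f1 / ((1 - x) * f0 + x * f1) ∈ Icc (0:ℝ) 1 := by
  have hw : 0 ≤ (1 - x) * f0 + x * f1 :=
    add_nonneg (mul_nonneg (by linarith) h0) (mul_nonneg hx0 h1)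
  rcases eq_or_lt_of_le hw with h | h
  · have h1' : x * f1 = 0 := by
      have h2 : 0 ≤ (1 - x) * f0 := mul_nonneg (by linarith) h0
      have h3 : 0 ≤ x * f1 := mul_nonneg hx0 h1
      linarith
    rw [h1']; simp
  · exact ⟨div_nonneg (mul_nonneg hx0 h1) hw, by
      rw [div_le_one h]
      have : 0 ≤ (1 - x) * f0 := mul_nonneg (by linarith) h0
      linarith⟩

private lemma aux_integrable {Y : Type*} [MeasurableSpace Y] {μ : Measure Y}
    {f0 f1 : Y → ℝ} (hm0 : Measurable f0) (hm1 : Measurable f1)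
    (h0 : ∀ y, 0 ≤ f0 y) (h1 : ∀ y, 0 ≤ f1 y)
    (hint1 : Integrable f1 μ)
    {G : ℝ → ℝ} (hGc : ContinuousOn G (Icc 0 1))
    {M : ℝ} (hGb : ∀ u ∈ Icc (0:ℝ) 1, 0 ≤ G u ∧ G u ≤ M * u)
    {x : ℝ} (hx : x ∈ Icc (0:ℝ) 1) :
    Integrable (fun y => ((1 - x) * f0 y + x * f1 y) *
      G (x * f1 y / ((1 - x) * f0 y + x * f1 y))) μ := by
  have hargm : Measurable (fun y => x * f1 y / ((1 - x) * f0 y + x * f1 y)) :=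
    (measurable_const.mul hm1).div ((measurable_const.mul hm0).add (measurable_const.mul hm1))
  have he : Measurable (fun y => (⟨x * f1 y / ((1 - x) * f0 y + x * f1 y),
      aux_arg_mem' hx.1 hx.2 (h0 y) (h1 y)⟩ : Icc (0:ℝ) 1)) := hargm.subtype_mk
  have hGr : Continuous (fun u : Icc (0:ℝ) 1 => G u) :=
    continuousOn_iff_continuous_restrict.mp hGc
  have hcomp : Measurable (fun y => G (x * f1 y / ((1 - x) * f0 y + x * f1 y))) :=
    hGr.measurable.comp he
  have hmeas : Measurable (fun y => ((1 - x) * f0 y + x * f1 y) *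
      G (x * f1 y / ((1 - x) * f0 y + x * f1 y))) :=
    ((measurable_const.mul hm0).add (measurable_const.mul hm1)).mul hcomp
  refine Integrable.mono' (hint1.const_mul (M * x)) hmeas.aestronglyMeasurable
    (ae_of_all _ fun y => ?_)
  have hwnn : 0 ≤ (1 - x) * f0 y + x * f1 y :=
    add_nonneg (mul_nonneg (by linarith [hx.2]) (h0 y)) (mul_nonneg hx.1 (h1 y))
  have hmem := aux_arg_mem' hx.1 hx.2 (h0 y) (h1 y)
  have hGnn := (hGb _ hmem).1
  have hGle := (hGb _ hmem).2
  rw [Real.norm_eq_abs, abs_of_nonneg (mul_nonneg hwnn hGnn)]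
  rcases eq_or_lt_of_le hwnn with h | h
  · have hz : x * f1 y = 0 := by
      have h2 : 0 ≤ (1 - x) * f0 y := mul_nonneg (by linarith [hx.2]) (h0 y)
      have h3 : 0 ≤ x * f1 y := mul_nonneg hx.1 (h1 y)
      linarith
    rw [← h, zero_mul, mul_assoc, hz, mul_zero]
  · calc ((1 - x) * f0 y + x * f1 y) * G (x * f1 y / ((1 - x) * f0 y + x * f1 y))
        ≤ ((1 - x) * f0 y + x * f1 y) * (M * (x * f1 y / ((1 - x) * f0 y + x * f1 y))) :=
          mul_le_mul_of_nonneg_left hGle h.le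
      _ = M * x * f1 y := by field_simp

private lemma aux_min_concave {f g : ℝ → ℝ} {t : Set ℝ} (hf : ConcaveOn ℝ t f)
    (hg : ConcaveOn ℝ t g) : ConcaveOn ℝ t (fun x => min (f x) (g x)) := by
  refine ⟨hf.1, fun a ha b hb p q hp hq hpq => ?_⟩
  simp only [smul_eq_mul]
  refine le_min ?_ ?_
  · have h1 := hf.2 ha hb hp hq hpq
    simp only [smul_eq_mul] at h1
    have h2 : p * min (f a) (g a) ≤ p * f a := mul_le_mul_of_nonneg_left (min_le_left _ _) hp
    have h3 : q * min (f b) (g b) ≤ q * f b := mul_le_mul_of_nonneg_left (min_le_left _ _) hq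
    linarith
  · have h1 := hg.2 ha hb hp hq hpq
    simp only [smul_eq_mul] at h1
    have h2 : p * min (f a) (g a) ≤ p * g a := mul_le_mul_of_nonneg_left (min_le_right _ _) hp
    have h3 : q * min (f b) (g b) ≤ q * g b := mul_le_mul_of_nonneg_left (min_le_right _ _) hq
    linarith

private lemma aux_inf'_concave {ι : Type*} {s : Finset ι} (hs : s.Nonempty)
    {F : ι → ℝ → ℝ} {t : Set ℝ} (ht : Convex ℝ t)
    (h : ∀ i ∈ s, ConcaveOn ℝ t (F i)) :
    ConcaveOn ℝ t (fun x => s.inf' hs fun i => F i x) := by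
  refine ⟨ht, fun a ha b hb p q hp hq hpq => ?_⟩
  simp only [smul_eq_mul]
  refine Finset.le_inf' _ _ fun i hi => ?_
  have h1 : s.inf' hs (fun j => F j a) ≤ F i a := Finset.inf'_le _ hi
  have h2 : s.inf' hs (fun j => F j b) ≤ F i b := Finset.inf'_le _ hi
  have h3 := (h i hi).2 ha hb hp hq hpq
  simp only [smul_eq_mul] at h3
  nlinarith [mul_le_mul_of_nonneg_left h1 hp, mul_le_mul_of_nonneg_left h2 hq]

private lemma aux_cont {μ₀ μ₁ : ℝ} (hμ₀ : 0 < μ₀) (hμ₁ : 0 < μ₁) {f : ℝ → ℝ}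
    (hf : ConcaveOn ℝ (Icc (0:ℝ) 1) f)
    (hb : ∀ x ∈ Icc (0:ℝ) 1, 0 ≤ f x ∧ f x ≤ min (μ₁ * x) (μ₀ * (1 - x))) :
    ContinuousOn f (Icc (0:ℝ) 1) := by
  have hint : ContinuousOn f (Ioo (0:ℝ) 1) := by
    have := hf.continuousOn_interior
    rwa [interior_Icc] at this
  intro z hz
  rcases eq_or_lt_of_le hz.1 with h | h
  · subst h
    have hf0 : f 0 = 0 := le_antisymm
      (by simpa using (hb 0 ⟨le_rfl, by norm_num⟩).2.trans (min_le_left _ _))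
      (hb 0 ⟨le_rfl, by norm_num⟩).1
    have key : Tendsto f (𝓝[Icc (0:ℝ) 1] 0) (𝓝 0) := by
      apply squeeze_zero' (g := fun u => μ₁ * u)
      · filter_upwards [self_mem_nhdsWithin] with u hu; exact (hb u hu).1
      · filter_upwards [self_mem_nhdsWithin] with u hu
        exact (hb u hu).2.trans (min_le_left _ _)
      · have h2 : Tendsto (fun u : ℝ => μ₁ * u) (𝓝 0) (𝓝 (μ₁ * 0)) :=
          (continuous_const.mul continuous_id).tendsto 0
        simpa using h2.mono_left nhdsWithin_le_nhds
    show Tendsto f (𝓝[Icc (0:ℝ) 1] 0) (𝓝 (f 0))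
    rw [hf0]; exact key
  rcases eq_or_lt_of_le hz.2 with h1 | h1
  · subst h1
    have hf1 : f 1 = 0 := le_antisymm
      (by simpa using (hb 1 ⟨by norm_num, le_rfl⟩).2.trans (min_le_right _ _))
      (hb 1 ⟨by norm_num, le_rfl⟩).1
    have key : Tendsto f (𝓝[Icc (0:ℝ) 1] 1) (𝓝 0) := by
      apply squeeze_zero' (g := fun u => μ₀ * (1 - u))
      · filter_upwards [self_mem_nhdsWithin] with u hu; exact (hb u hu).1
      · filter_upwards [self_mem_nhdsWithin] with u hu
        exact (hb u hu).2.trans (min_le_right _ _)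
      · have h2 : Tendsto (fun u : ℝ => μ₀ * (1 - u)) (𝓝 1) (𝓝 (μ₀ * (1 - 1))) :=
          (continuous_const.mul (continuous_const.sub continuous_id)).tendsto 1
        simpa using h2.mono_left nhdsWithin_le_nhds
    show Tendsto f (𝓝[Icc (0:ℝ) 1] 1) (𝓝 (f 1))
    rw [hf1]; exact key
  · exact ((hint z ⟨h, h1⟩).continuousAt (Ioo_mem_nhds h h1)).continuousWithinAt

/-- The iterates of the Bellman operator for the usage-constrained sequential test
are concave, sandwiched between `0` and the stopping cost `φ`, and pointwise
nonincreasing in the horizon. -/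
theorem bellman_iterates_concave_monotone
    {Y : Type*} [MeasurableSpace Y] (μ : Measure Y) [SigmaFinite μ]
    (K : ℕ) (hK : 0 < K)
    (f₀ f₁ : Fin K → Y → ℝ)
    (hm0 : ∀ ℓ, Measurable (f₀ ℓ)) (hm1 : ∀ ℓ, Measurable (f₁ ℓ))
    (h0nn : ∀ ℓ y, 0 ≤ f₀ ℓ y) (h1nn : ∀ ℓ y, 0 ≤ f₁ ℓ y)
    (h0int : ∀ ℓ, ∫ y, f₀ ℓ y ∂μ = 1) (h1int : ∀ ℓ, ∫ y, f₁ ℓ y ∂μ = 1)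
    (h0pos : ∀ ℓ, ∀ᵐ y ∂μ, 0 < f₀ ℓ y) (h1pos : ∀ ℓ, ∀ᵐ y ∂μ, 0 < f₁ ℓ y)
    (C : Fin K → ℝ) (hC : ∀ ℓ, 0 < C ℓ)
    (μ₀ μ₁ : ℝ) (hμ₀ : 0 < μ₀) (hμ₁ : 0 < μ₁)
    (φ : ℝ → ℝ) (hφ : ∀ x, φ x = min (μ₁ * x) (μ₀ * (1 - x)))
    (Gseq : ℕ → ℝ → ℝ)
    (hG0 : ∀ x, Gseq 0 x = φ x)
    (hGsucc : ∀ n x, Gseq (n + 1) x = min (φ x)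
      (Finset.univ.inf' (Finset.univ_nonempty_iff.mpr (Fin.pos_iff_nonempty.mp hK))
        (fun ℓ => C ℓ + ∫ y, ((1 - x) * f₀ ℓ y + x * f₁ ℓ y) *
          Gseq n (x * f₁ ℓ y / ((1 - x) * f₀ ℓ y + x * f₁ ℓ y)) ∂μ))) :
    ∀ n : ℕ,
      ConcaveOn ℝ (Icc (0:ℝ) 1) (Gseq n) ∧
      (∀ x ∈ Icc (0:ℝ) 1, 0 ≤ Gseq n x ∧ Gseq n x ≤ φ x) ∧
      (∀ x ∈ Icc (0:ℝ) 1, Gseq (n + 1) x ≤ Gseq n x) := by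
  have hIf1 : ∀ ℓ, Integrable (f₁ ℓ) μ := by
    intro ℓ; by_contra h
    have := h1int ℓ
    rw [integral_undef h] at this
    norm_num at this
  -- φ facts
  have hφconc : ConcaveOn ℝ (Icc (0:ℝ) 1) φ := by
    have hE : φ = fun x => min (μ₁ * x) (μ₀ * (1 - x)) := funext hφ
    rw [hE]
    refine aux_min_concave ⟨convex_Icc 0 1, ?_⟩ ⟨convex_Icc 0 1, ?_⟩
    · intro a _ b _ p q hp hq hpq
      simp only [smul_eq_mul]
      exact le_of_eq (by ring)
    · intro a _ b _ p q hp hq hpq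
      simp only [smul_eq_mul]
      exact le_of_eq (by linear_combination μ₀ * hpq)
  have hφ0 : ∀ x ∈ Icc (0:ℝ) 1, 0 ≤ φ x := fun x hx => by
    rw [hφ]
    exact le_min (mul_nonneg hμ₁.le hx.1) (mul_nonneg hμ₀.le (by linarith [hx.2]))
  -- Key induction: concavity, bounds, continuity
  have key : ∀ n, ConcaveOn ℝ (Icc (0:ℝ) 1) (Gseq n) ∧
      (∀ x ∈ Icc (0:ℝ) 1, 0 ≤ Gseq n x ∧ Gseq n x ≤ φ x) ∧
      ContinuousOn (Gseq n) (Icc (0:ℝ) 1) := by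
    intro n
    induction n with
    | zero =>
      have hE : Gseq 0 = φ := funext hG0
      rw [hE]
      refine ⟨hφconc, fun x hx => ⟨hφ0 x hx, le_rfl⟩, ?_⟩
      exact aux_cont hμ₀ hμ₁ hφconc fun x hx => ⟨hφ0 x hx, le_of_eq (hφ x)⟩
    | succ n ih =>
      obtain ⟨ihc, ihb, ihcont⟩ := ih
      have hGb' : ∀ u ∈ Icc (0:ℝ) 1, 0 ≤ Gseq n u ∧ Gseq n u ≤ μ₁ * u := fun u hu =>
        ⟨(ihb u hu).1, (ihb u hu).2.trans (by rw [hφ]; exact min_le_left _ _)⟩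
      have hGn0 : Gseq n 0 = 0 := le_antisymm
        (by simpa using (hGb' 0 ⟨le_rfl, by norm_num⟩).2)
        (hGb' 0 ⟨le_rfl, by norm_num⟩).1
      have hGn1 : Gseq n 1 = 0 := le_antisymm
        (by
          have := (ihb 1 ⟨by norm_num, le_rfl⟩).2
          rw [hφ] at this
          simpa using this.trans (min_le_right _ _))
        (hGb' 1 ⟨by norm_num, le_rfl⟩).1
      have hInt : ∀ (ℓ : Fin K) (x : ℝ), x ∈ Icc (0:ℝ) 1 →
          Integrable (fun y => ((1 - x) * f₀ ℓ y + x * f₁ ℓ y) *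
            Gseq n (x * f₁ ℓ y / ((1 - x) * f₀ ℓ y + x * f₁ ℓ y))) μ := fun ℓ x hx =>
        aux_integrable (hm0 ℓ) (hm1 ℓ) (h0nn ℓ) (h1nn ℓ) (hIf1 ℓ) ihcont hGb' hx
      -- concavity of each operator term
      have hTconc : ∀ ℓ : Fin K, ConcaveOn ℝ (Icc (0:ℝ) 1)
          (fun x => C ℓ + ∫ y, ((1 - x) * f₀ ℓ y + x * f₁ ℓ y) *
            Gseq n (x * f₁ ℓ y / ((1 - x) * f₀ ℓ y + x * f₁ ℓ y)) ∂μ) := by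
        intro ℓ
        refine ⟨convex_Icc 0 1, fun a ha b hb t s ht hs hts => ?_⟩
        simp only [smul_eq_mul]
        have hx : t * a + s * b ∈ Icc (0:ℝ) 1 := by
          constructor
          · exact add_nonneg (mul_nonneg ht ha.1) (mul_nonneg hs hb.1)
          · nlinarith [mul_nonneg ht (sub_nonneg.2 ha.2), mul_nonneg hs (sub_nonneg.2 hb.2)]
        have claim : t * (∫ y, ((1 - a) * f₀ ℓ y + a * f₁ ℓ y) *
              Gseq n (a * f₁ ℓ y / ((1 - a) * f₀ ℓ y + a * f₁ ℓ y)) ∂μ) +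
            s * (∫ y, ((1 - b) * f₀ ℓ y + b * f₁ ℓ y) *
              Gseq n (b * f₁ ℓ y / ((1 - b) * f₀ ℓ y + b * f₁ ℓ y)) ∂μ) ≤
            ∫ y, ((1 - (t * a + s * b)) * f₀ ℓ y + (t * a + s * b) * f₁ ℓ y) *
              Gseq n ((t * a + s * b) * f₁ ℓ y /
                ((1 - (t * a + s * b)) * f₀ ℓ y + (t * a + s * b) * f₁ ℓ y)) ∂μ := by
          rw [← integral_const_mul, ← integral_const_mul,
            ← integral_add ((hInt ℓ a ha).const_mul t) ((hInt ℓ b hb).const_mul s)]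
          refine integral_mono
            (((hInt ℓ a ha).const_mul t).add ((hInt ℓ b hb).const_mul s))
            (hInt ℓ _ hx) (fun y => ?_)
          exact aux_pointwise_s4 ihc hGn0 hGn1 ha hb ht hs hts (h0nn ℓ y) (h1nn ℓ y)
        have e : t * (C ℓ) + s * (C ℓ) = C ℓ := by linear_combination (C ℓ) * hts
        have goal2 : t * (C ℓ + ∫ y, ((1 - a) * f₀ ℓ y + a * f₁ ℓ y) *
              Gseq n (a * f₁ ℓ y / ((1 - a) * f₀ ℓ y + a * f₁ ℓ y)) ∂μ) +
            s * (C ℓ + ∫ y, ((1 - b) * f₀ ℓ y + b * f₁ ℓ y) *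
              Gseq n (b * f₁ ℓ y / ((1 - b) * f₀ ℓ y + b * f₁ ℓ y)) ∂μ) ≤
            C ℓ + ∫ y, ((1 - (t * a + s * b)) * f₀ ℓ y + (t * a + s * b) * f₁ ℓ y) *
              Gseq n ((t * a + s * b) * f₁ ℓ y /
                ((1 - (t * a + s * b)) * f₀ ℓ y + (t * a + s * b) * f₁ ℓ y)) ∂μ := by
          nlinarith [claim, e]
        exact goal2
      have hconc : ConcaveOn ℝ (Icc (0:ℝ) 1) (Gseq (n + 1)) := by
        have hE : Gseq (n + 1) = fun x => min (φ x)
            (Finset.univ.inf' (Finset.univ_nonempty_iff.mpr (Fin.pos_iff_nonempty.mp hK))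
              (fun ℓ => C ℓ + ∫ y, ((1 - x) * f₀ ℓ y + x * f₁ ℓ y) *
                Gseq n (x * f₁ ℓ y / ((1 - x) * f₀ ℓ y + x * f₁ ℓ y)) ∂μ)) :=
          funext (hGsucc n)
        rw [hE]
        exact aux_min_concave hφconc
          (aux_inf'_concave _ (convex_Icc 0 1) fun ℓ _ => hTconc ℓ)
      have hbd : ∀ x ∈ Icc (0:ℝ) 1, 0 ≤ Gseq (n + 1) x ∧ Gseq (n + 1) x ≤ φ x := by
        intro x hx
        rw [hGsucc]
        constructor
        · refine le_min (hφ0 x hx) (Finset.le_inf' _ _ fun ℓ _ => ?_)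
          have hpos : 0 ≤ ∫ y, ((1 - x) * f₀ ℓ y + x * f₁ ℓ y) *
              Gseq n (x * f₁ ℓ y / ((1 - x) * f₀ ℓ y + x * f₁ ℓ y)) ∂μ := by
            refine integral_nonneg fun y => mul_nonneg ?_ ?_
            · exact add_nonneg (mul_nonneg (by linarith [hx.2]) (h0nn ℓ y))
                (mul_nonneg hx.1 (h1nn ℓ y))
            · exact (hGb' _ (aux_arg_mem' hx.1 hx.2 (h0nn ℓ y) (h1nn ℓ y))).1
          linarith [hC ℓ]
        · exact min_le_left _ _
      refine ⟨hconc, hbd, ?_⟩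
      exact aux_cont hμ₀ hμ₁ hconc fun x hx =>
        ⟨(hbd x hx).1, (hφ x) ▸ (hbd x hx).2⟩
  -- monotonicity in n
  have mono : ∀ n, ∀ x ∈ Icc (0:ℝ) 1, Gseq (n + 1) x ≤ Gseq n x := by
    intro n
    induction n with
    | zero =>
      intro x hx
      rw [hGsucc, hG0]
      exact min_le_left _ _
    | succ n ih =>
      intro x hx
      obtain ⟨hcn, hbn, hctn⟩ := key n
      obtain ⟨hcn1, hbn1, hctn1⟩ := key (n + 1)
      have hGb' : ∀ u ∈ Icc (0:ℝ) 1, 0 ≤ Gseq n u ∧ Gseq n u ≤ μ₁ * u := fun u hu =>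
        ⟨(hbn u hu).1, (hbn u hu).2.trans (by rw [hφ]; exact min_le_left _ _)⟩
      rw [hGsucc, hGsucc]
      refine min_le_min le_rfl (Finset.le_inf' _ _ fun ℓ hℓ => ?_)
      refine le_trans (Finset.inf'_le _ hℓ) ?_
      refine add_le_add_right ?_ (C ℓ)
      refine integral_mono_of_nonneg (ae_of_all _ fun y => ?_)
        (aux_integrable (hm0 ℓ) (hm1 ℓ) (h0nn ℓ) (h1nn ℓ) (hIf1 ℓ) hctn hGb' hx)
        (ae_of_all _ fun y => ?_)
      · refine mul_nonneg ?_ ?_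
        · exact add_nonneg (mul_nonneg (by linarith [hx.2]) (h0nn ℓ y))
            (mul_nonneg hx.1 (h1nn ℓ y))
        · exact (hbn1 _ (aux_arg_mem' hx.1 hx.2 (h0nn ℓ y) (h1nn ℓ y))).1
      · refine mul_le_mul_of_nonneg_left ?_ ?_
        · exact ih _ (aux_arg_mem' hx.1 hx.2 (h0nn ℓ y) (h1nn ℓ y))
        · exact add_nonneg (mul_nonneg (by linarith [hx.2]) (h0nn ℓ y))
            (mul_nonneg hx.1 (h1nn ℓ y))
  intro n
  exact ⟨(key n).1, (key n).2.1, mono n⟩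
end

section
/- In the setting of the Bellman operator B of the preceding statement (densities f₀^ℓ, f₁^ℓ strictly positive μ-a.e., costs C_ℓ > 0, multipliers μ₀, μ₁ > 0, φ(x) = min{μ₁x, μ₀(1−x)}, G₀ = φ, G_{n+1} = B Gₙ), the pointwise limit G_∞(x) = lim_{n→∞} Gₙ(x) exists for every x ∈ [0,1], G_∞ is concave on [0,1], and G_∞ satisfies the Bellman equation G_∞(x) = min{ φ(x), min_{1≤ℓ≤K} [ C_ℓ + ∫_Y ((1−x)f₀^ℓ(y) + x f₁^ℓ(y)) · G_∞( x f₁^ℓ(y) / ((1−x)f₀^ℓ(y) + x f₁^ℓ(y)) ) dμ(y) ] } for all x ∈ [0,1]. -/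
open Set MeasureTheory Filter

/-! ### Auxiliary lemmas -/

lemma post_mem_Icc {a b x : ℝ} (ha : 0 ≤ a) (hb : 0 ≤ b) (hx : x ∈ Icc (0:ℝ) 1) :
    x * b / ((1 - x) * a + x * b) ∈ Icc (0:ℝ) 1 := by
  obtain ⟨hx0, hx1⟩ := hx
  have hw : 0 ≤ (1 - x) * a + x * b :=
    add_nonneg (mul_nonneg (by linarith) ha) (mul_nonneg hx0 hb)
  rcases hw.eq_or_lt with h | h
  · rw [← h, div_zero]
    exact ⟨le_refl _, zero_le_one⟩
  · refine ⟨div_nonneg (mul_nonneg hx0 hb) hw, (div_le_one h).2 ?_⟩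
    nlinarith [mul_nonneg (sub_nonneg.2 hx1) ha]

lemma persp_ineq {G : ℝ → ℝ} (hG : ConcaveOn ℝ (Icc (0:ℝ) 1) G)
    {sx tx sy ty θ κ : ℝ} (hsx : 0 ≤ sx) (hsxt : sx ≤ tx) (hsy : 0 ≤ sy) (hsyt : sy ≤ ty)
    (hθ : 0 ≤ θ) (hκ : 0 ≤ κ) (hθκ : θ + κ = 1) :
    θ * (tx * G (sx / tx)) + κ * (ty * G (sy / ty)) ≤
      (θ * tx + κ * ty) * G ((θ * sx + κ * sy) / (θ * tx + κ * ty)) := by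
  have htx0 : 0 ≤ tx := hsx.trans hsxt
  have hty0 : 0 ≤ ty := hsy.trans hsyt
  set T := θ * tx + κ * ty with hT
  have hT0 : 0 ≤ T := add_nonneg (mul_nonneg hθ htx0) (mul_nonneg hκ hty0)
  rcases hT0.eq_or_lt with hTz | hTpos
  · have h1 : θ * tx = 0 := by nlinarith [mul_nonneg hθ htx0, mul_nonneg hκ hty0]
    have h2 : κ * ty = 0 := by nlinarith [mul_nonneg hθ htx0, mul_nonneg hκ hty0]
    rw [← mul_assoc, ← mul_assoc, h1, h2, ← hTz]
    simp
  · have hTne : T ≠ 0 := ne_of_gt hTpos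
    have hpx : sx / tx ∈ Icc (0:ℝ) 1 := by
      rcases htx0.eq_or_lt with h | h
      · rw [← h, div_zero]; exact ⟨le_refl _, zero_le_one⟩
      · exact ⟨div_nonneg hsx htx0, (div_le_one h).2 hsxt⟩
    have hpy : sy / ty ∈ Icc (0:ℝ) 1 := by
      rcases hty0.eq_or_lt with h | h
      · rw [← h, div_zero]; exact ⟨le_refl _, zero_le_one⟩
      · exact ⟨div_nonneg hsy hty0, (div_le_one h).2 hsyt⟩
    have hsum : θ * tx / T + κ * ty / T = 1 := by
      rw [← add_div, ← hT, div_self hTne]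
    have key := hG.2 hpx hpy (div_nonneg (mul_nonneg hθ htx0) hT0)
      (div_nonneg (mul_nonneg hκ hty0) hT0) hsum
    simp only [smul_eq_mul] at key
    have e1 : θ * tx / T * (sx / tx) = θ * sx / T := by
      rcases htx0.eq_or_lt with h | h
      · have hsx0 : sx = 0 := le_antisymm (h ▸ hsxt) hsx
        rw [← h, hsx0]; simp
      · field_simp
    have e2 : κ * ty / T * (sy / ty) = κ * sy / T := by
      rcases hty0.eq_or_lt with h | h
      · have hsy0 : sy = 0 := le_antisymm (h ▸ hsyt) hsy
        rw [← h, hsy0]; simp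
      · field_simp
    rw [e1, e2, ← add_div] at key
    have key2 := mul_le_mul_of_nonneg_left key hT0
    calc θ * (tx * G (sx / tx)) + κ * (ty * G (sy / ty))
        = T * (θ * tx / T * G (sx / tx) + κ * ty / T * G (sy / ty)) := by
          field_simp
      _ ≤ T * G ((θ * sx + κ * sy) / T) := key2

lemma perspective_concave {G : ℝ → ℝ} (hG : ConcaveOn ℝ (Icc (0:ℝ) 1) G)
    {a b : ℝ} (ha : 0 ≤ a) (hb : 0 ≤ b) :
    ConcaveOn ℝ (Icc (0:ℝ) 1)
      (fun x => ((1 - x) * a + x * b) * G (x * b / ((1 - x) * a + x * b))) := by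
  refine ⟨convex_Icc 0 1, fun x hx y hy θ κ hθ hκ hθκ => ?_⟩
  simp only [smul_eq_mul]
  have h1 : (1 - (θ * x + κ * y)) * a + (θ * x + κ * y) * b
      = θ * ((1 - x) * a + x * b) + κ * ((1 - y) * a + y * b) := by
    linear_combination (-a) * hθκ
  have h2 : (θ * x + κ * y) * b = θ * (x * b) + κ * (y * b) := by ring
  rw [h1, h2]
  exact persp_ineq hG (mul_nonneg hx.1 hb)
    (le_add_of_nonneg_left (mul_nonneg (by linarith [hx.2]) ha))
    (mul_nonneg hy.1 hb)
    (le_add_of_nonneg_left (mul_nonneg (by linarith [hy.2]) ha))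
    hθ hκ hθκ

lemma integrand_measurable {Y : Type*} [MeasurableSpace Y] {f₀ f₁ : Y → ℝ}
    (hm0 : Measurable f₀) (hm1 : Measurable f₁) {G : ℝ → ℝ} (hGm : Measurable G) (x : ℝ) :
    Measurable (fun y => ((1 - x) * f₀ y + x * f₁ y) *
      G (x * f₁ y / ((1 - x) * f₀ y + x * f₁ y))) := by
  have hw : Measurable (fun y => (1 - x) * f₀ y + x * f₁ y) :=
    (hm0.const_mul _).add (hm1.const_mul _)
  exact hw.mul (hGm.comp ((hm1.const_mul x).div hw))

lemma integrand_integrable {Y : Type*} [MeasurableSpace Y] {μ : Measure Y}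
    {f₀ f₁ : Y → ℝ} (hm0 : Measurable f₀) (hm1 : Measurable f₁)
    (h0nn : ∀ y, 0 ≤ f₀ y) (h1nn : ∀ y, 0 ≤ f₁ y)
    (hi0 : Integrable f₀ μ) (hi1 : Integrable f₁ μ)
    {G : ℝ → ℝ} (hGm : Measurable G) {M : ℝ}
    (hGb : ∀ p ∈ Icc (0:ℝ) 1, |G p| ≤ M)
    {x : ℝ} (hx : x ∈ Icc (0:ℝ) 1) :
    Integrable (fun y => ((1 - x) * f₀ y + x * f₁ y) *
      G (x * f₁ y / ((1 - x) * f₀ y + x * f₁ y))) μ := by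
  have hw : Integrable (fun y => (1 - x) * f₀ y + x * f₁ y) μ :=
    (hi0.const_mul _).add (hi1.const_mul _)
  have hM0 : 0 ≤ M := le_trans (abs_nonneg _) (hGb 0 ⟨le_refl _, zero_le_one⟩)
  refine (hw.const_mul M).mono
    (integrand_measurable hm0 hm1 hGm x).aestronglyMeasurable ?_
  filter_upwards with y
  have hp := post_mem_Icc (h0nn y) (h1nn y) hx
  simp only [norm_mul, Real.norm_eq_abs]
  calc |(1 - x) * f₀ y + x * f₁ y| * |G (x * f₁ y / ((1 - x) * f₀ y + x * f₁ y))|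
      ≤ |(1 - x) * f₀ y + x * f₁ y| * M :=
        mul_le_mul_of_nonneg_left (hGb _ hp) (abs_nonneg _)
    _ ≤ |M| * |(1 - x) * f₀ y + x * f₁ y| := by
        rw [abs_of_nonneg hM0, mul_comm]

lemma integral_perspective_concave {Y : Type*} [MeasurableSpace Y] {μ : Measure Y}
    {f₀ f₁ : Y → ℝ} (hm0 : Measurable f₀) (hm1 : Measurable f₁)
    (h0nn : ∀ y, 0 ≤ f₀ y) (h1nn : ∀ y, 0 ≤ f₁ y)
    (hi0 : Integrable f₀ μ) (hi1 : Integrable f₁ μ)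
    {G : ℝ → ℝ} (hGm : Measurable G) {M : ℝ}
    (hGb : ∀ p ∈ Icc (0:ℝ) 1, |G p| ≤ M) (hGc : ConcaveOn ℝ (Icc (0:ℝ) 1) G) :
    ConcaveOn ℝ (Icc (0:ℝ) 1) (fun x => ∫ y, ((1 - x) * f₀ y + x * f₁ y) *
      G (x * f₁ y / ((1 - x) * f₀ y + x * f₁ y)) ∂μ) := by
  refine ⟨convex_Icc 0 1, fun x hx y hy θ κ hθ hκ hθκ => ?_⟩
  have hz : θ • x + κ • y ∈ Icc (0:ℝ) 1 := (convex_Icc 0 1) hx hy hθ hκ hθκ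
  have hix := integrand_integrable hm0 hm1 h0nn h1nn hi0 hi1 hGm hGb hx
  have hiy := integrand_integrable hm0 hm1 h0nn h1nn hi0 hi1 hGm hGb hy
  have hiz := integrand_integrable hm0 hm1 h0nn h1nn hi0 hi1 hGm hGb hz
  have h1 : Integrable (fun y' => θ • (((1 - x) * f₀ y' + x * f₁ y') *
      G (x * f₁ y' / ((1 - x) * f₀ y' + x * f₁ y')))) μ := by exact hix.smul θ
  have h2 : Integrable (fun y' => κ • (((1 - y) * f₀ y' + y * f₁ y') *
      G (y * f₁ y' / ((1 - y) * f₀ y' + y * f₁ y')))) μ := by exact hiy.smul κ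
  have heq : θ • (∫ y', ((1 - x) * f₀ y' + x * f₁ y') *
      G (x * f₁ y' / ((1 - x) * f₀ y' + x * f₁ y')) ∂μ) +
      κ • (∫ y', ((1 - y) * f₀ y' + y * f₁ y') *
      G (y * f₁ y' / ((1 - y) * f₀ y' + y * f₁ y')) ∂μ)
      = ∫ y', (θ • (((1 - x) * f₀ y' + x * f₁ y') *
          G (x * f₁ y' / ((1 - x) * f₀ y' + x * f₁ y'))) +
        κ • (((1 - y) * f₀ y' + y * f₁ y') *
          G (y * f₁ y' / ((1 - y) * f₀ y' + y * f₁ y')))) ∂μ := by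
    rw [integral_add h1 h2, integral_smul, integral_smul]
  show _ ≤ (fun x => ∫ y, ((1 - x) * f₀ y + x * f₁ y) *
      G (x * f₁ y / ((1 - x) * f₀ y + x * f₁ y)) ∂μ) (θ • x + κ • y)
  rw [heq]
  refine integral_mono (h1.add h2) hiz fun y' => ?_
  exact (perspective_concave hGc (h0nn y') (h1nn y')).2 hx hy hθ hκ hθκ

lemma finset_inf'_concave {ι : Type*} (f : ι → ℝ → ℝ) (s : Finset ι) (hs : s.Nonempty) :
    (∀ i ∈ s, ConcaveOn ℝ (Icc (0:ℝ) 1) (f i)) →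
    ConcaveOn ℝ (Icc (0:ℝ) 1) (fun x => s.inf' hs fun i => f i x) := by
  induction hs using Finset.Nonempty.cons_induction with
  | singleton a => intro h; simpa using h a (Finset.mem_singleton_self a)
  | cons a s ha hs ih =>
      intro h
      have h1 := h a (Finset.mem_cons_self a s)
      have h2 := ih fun i hi => h i (Finset.mem_cons_of_mem hi)
      have h3 := h1.inf h2
      have e : (fun x => (Finset.cons a s ha).inf' (Finset.cons_nonempty ha) fun i => f i x)
          = fun x => f a x ⊓ s.inf' hs fun i => f i x :=
        funext fun x => by rw [Finset.inf'_cons]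
      rw [e]
      exact h3

lemma finset_inf'_measurable {ι : Type*} (f : ι → ℝ → ℝ) (s : Finset ι) (hs : s.Nonempty) :
    (∀ i ∈ s, Measurable (f i)) →
    Measurable (fun x => s.inf' hs fun i => f i x) := by
  induction hs using Finset.Nonempty.cons_induction with
  | singleton a => intro h; simpa using h a (Finset.mem_singleton_self a)
  | cons a s ha hs ih =>
      intro h
      have h1 := h a (Finset.mem_cons_self a s)
      have h2 := ih fun i hi => h i (Finset.mem_cons_of_mem hi)
      have e : (fun x => (Finset.cons a s ha).inf' (Finset.cons_nonempty ha) fun i => f i x)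
          = fun x => min (f a x) (s.inf' hs fun i => f i x) :=
        funext fun x => by rw [Finset.inf'_cons]
      rw [e]
      exact h1.min h2

lemma finset_inf'_tendsto {ι α : Type*} {l : Filter α} (F : α → ι → ℝ) (L : ι → ℝ)
    (s : Finset ι) (hs : s.Nonempty) :
    (∀ i ∈ s, Tendsto (fun n => F n i) l (nhds (L i))) →
    Tendsto (fun n => s.inf' hs (F n)) l (nhds (s.inf' hs L)) := by
  induction hs using Finset.Nonempty.cons_induction with
  | singleton a => intro h; simpa using h a (Finset.mem_singleton_self a)
  | cons a s ha hs ih =>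
      intro h
      have h1 := h a (Finset.mem_cons_self a s)
      have h2 := ih fun i hi => h i (Finset.mem_cons_of_mem hi)
      have e1 : (fun n => (Finset.cons a s ha).inf' (Finset.cons_nonempty ha) (F n))
          = fun n => min (F n a) (s.inf' hs (F n)) :=
        funext fun n => by rw [Finset.inf'_cons]
      have e2 : (Finset.cons a s ha).inf' (Finset.cons_nonempty ha) L
          = min (L a) (s.inf' hs L) := by rw [Finset.inf'_cons]
      rw [e1, e2]
      exact h1.min h2

lemma integral_param_measurable {Y : Type*} [MeasurableSpace Y] (μ : Measure Y)
    [SFinite μ] {f₀ f₁ : Y → ℝ} (hm0 : Measurable f₀) (hm1 : Measurable f₁)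
    {G : ℝ → ℝ} (hGm : Measurable G) :
    Measurable (fun x : ℝ => ∫ y, ((1 - x) * f₀ y + x * f₁ y) *
      G (x * f₁ y / ((1 - x) * f₀ y + x * f₁ y)) ∂μ) := by
  have hw : Measurable (fun p : ℝ × Y => (1 - p.1) * f₀ p.2 + p.1 * f₁ p.2) :=
    ((measurable_const.sub measurable_fst).mul (hm0.comp measurable_snd)).add
      (measurable_fst.mul (hm1.comp measurable_snd))
  have hj : Measurable (fun p : ℝ × Y => ((1 - p.1) * f₀ p.2 + p.1 * f₁ p.2) *
      G (p.1 * f₁ p.2 / ((1 - p.1) * f₀ p.2 + p.1 * f₁ p.2))) :=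
    hw.mul (hGm.comp ((measurable_fst.mul (hm1.comp measurable_snd)).div hw))
  exact hj.stronglyMeasurable.integral_prod_right'.measurable

/-- Lemma 5 / equation (35) of the paper: the finite-horizon value functions
converge pointwise to a concave limit that satisfies the stationary Bellman
equation of the infinite-horizon Bayesian problem. -/
theorem bellman_iterates_limit_fixed_point
    {Y : Type*} [MeasurableSpace Y] (μ : Measure Y) [SigmaFinite μ]
    (K : ℕ) (hK : 0 < K)
    (f₀ f₁ : Fin K → Y → ℝ)
    (hm0 : ∀ ℓ, Measurable (f₀ ℓ)) (hm1 : ∀ ℓ, Measurable (f₁ ℓ))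
    (h0nn : ∀ ℓ y, 0 ≤ f₀ ℓ y) (h1nn : ∀ ℓ y, 0 ≤ f₁ ℓ y)
    (h0int : ∀ ℓ, ∫ y, f₀ ℓ y ∂μ = 1) (h1int : ∀ ℓ, ∫ y, f₁ ℓ y ∂μ = 1)
    (h0pos : ∀ ℓ, ∀ᵐ y ∂μ, 0 < f₀ ℓ y) (h1pos : ∀ ℓ, ∀ᵐ y ∂μ, 0 < f₁ ℓ y)
    (C : Fin K → ℝ) (hC : ∀ ℓ, 0 < C ℓ)
    (μ₀ μ₁ : ℝ) (hμ₀ : 0 < μ₀) (hμ₁ : 0 < μ₁)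
    (φ : ℝ → ℝ) (hφ : ∀ x, φ x = min (μ₁ * x) (μ₀ * (1 - x)))
    (Gseq : ℕ → ℝ → ℝ)
    (hG0 : ∀ x, Gseq 0 x = φ x)
    (hGsucc : ∀ n x, Gseq (n + 1) x = min (φ x)
      (Finset.univ.inf' (Finset.univ_nonempty_iff.mpr (Fin.pos_iff_nonempty.mp hK))
        (fun ℓ => C ℓ + ∫ y, ((1 - x) * f₀ ℓ y + x * f₁ ℓ y) *
          Gseq n (x * f₁ ℓ y / ((1 - x) * f₀ ℓ y + x * f₁ ℓ y)) ∂μ))) :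
    ∃ Ginf : ℝ → ℝ,
      (∀ x ∈ Icc (0:ℝ) 1, Tendsto (fun n => Gseq n x) atTop (nhds (Ginf x))) ∧
      ConcaveOn ℝ (Icc (0:ℝ) 1) Ginf ∧
      (∀ x ∈ Icc (0:ℝ) 1, Ginf x = min (φ x)
        (Finset.univ.inf' (Finset.univ_nonempty_iff.mpr (Fin.pos_iff_nonempty.mp hK))
          (fun ℓ => C ℓ + ∫ y, ((1 - x) * f₀ ℓ y + x * f₁ ℓ y) *
            Ginf (x * f₁ ℓ y / ((1 - x) * f₀ ℓ y + x * f₁ ℓ y)) ∂μ))) := by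
  have hne : (Finset.univ : Finset (Fin K)).Nonempty :=
    Finset.univ_nonempty_iff.mpr (Fin.pos_iff_nonempty.mp hK)
  -- integrability of the densities
  have hi0 : ∀ ℓ, Integrable (f₀ ℓ) μ := by
    intro ℓ; by_contra h
    have h1 := h0int ℓ
    rw [integral_undef h] at h1
    norm_num at h1
  have hi1 : ∀ ℓ, Integrable (f₁ ℓ) μ := by
    intro ℓ; by_contra h
    have h1 := h1int ℓ
    rw [integral_undef h] at h1
    norm_num at h1
  -- properties of φ
  have hφm : Measurable φ := by
    have h : φ = fun x => min (μ₁ * x) (μ₀ * (1 - x)) := funext hφ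
    rw [h]
    exact (measurable_const.mul measurable_id).min
      (measurable_const.mul (measurable_const.sub measurable_id))
  have hφc : ConcaveOn ℝ (Icc (0:ℝ) 1) φ := by
    have h1 : ConcaveOn ℝ (Icc (0:ℝ) 1) (fun x => μ₁ * x) :=
      ⟨convex_Icc 0 1, fun x _ y _ θ κ _ _ _ => by
        simp only [smul_eq_mul]; exact le_of_eq (by ring)⟩
    have h2 : ConcaveOn ℝ (Icc (0:ℝ) 1) (fun x => μ₀ * (1 - x)) :=
      ⟨convex_Icc 0 1, fun x _ y _ θ κ _ _ hθκ => by
        simp only [smul_eq_mul]; exact le_of_eq (by linear_combination μ₀ * hθκ)⟩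
    have h3 := h1.inf h2
    have h4 : ((fun x => μ₁ * x) ⊓ fun x => μ₀ * (1 - x)) = φ :=
      funext fun x => by rw [hφ]; rfl
    rwa [h4] at h3
  have hφnn : ∀ x ∈ Icc (0:ℝ) 1, 0 ≤ φ x := by
    intro x hx; rw [hφ]
    exact le_min (mul_nonneg hμ₁.le hx.1) (mul_nonneg hμ₀.le (by linarith [hx.2]))
  have hφle : ∀ x ∈ Icc (0:ℝ) 1, φ x ≤ μ₁ := by
    intro x hx; rw [hφ]
    exact (min_le_left _ _).trans (by nlinarith [hx.1, hx.2])
  -- invariant for all iterates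
  have key : ∀ n, Measurable (Gseq n) ∧ ConcaveOn ℝ (Icc (0:ℝ) 1) (Gseq n) ∧
      (∀ p ∈ Icc (0:ℝ) 1, 0 ≤ Gseq n p ∧ Gseq n p ≤ μ₁) := by
    intro n
    induction n with
    | zero =>
        have h : Gseq 0 = φ := funext hG0
        rw [h]
        exact ⟨hφm, hφc, fun p hp => ⟨hφnn p hp, hφle p hp⟩⟩
    | succ n ih =>
        obtain ⟨ihm, ihc, ihb⟩ := ih
        have habs : ∀ p ∈ Icc (0:ℝ) 1, |Gseq n p| ≤ μ₁ := fun p hp => by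
          rw [abs_of_nonneg (ihb p hp).1]; exact (ihb p hp).2
        have hform : Gseq (n + 1) = fun x => min (φ x)
            (Finset.univ.inf' hne (fun ℓ => C ℓ + ∫ y, ((1 - x) * f₀ ℓ y + x * f₁ ℓ y) *
              Gseq n (x * f₁ ℓ y / ((1 - x) * f₀ ℓ y + x * f₁ ℓ y)) ∂μ)) :=
          funext (hGsucc n)
        rw [hform]
        have hinfc : ConcaveOn ℝ (Icc (0:ℝ) 1) (fun x => Finset.univ.inf' hne
            (fun ℓ => C ℓ + ∫ y, ((1 - x) * f₀ ℓ y + x * f₁ ℓ y) *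
              Gseq n (x * f₁ ℓ y / ((1 - x) * f₀ ℓ y + x * f₁ ℓ y)) ∂μ)) := by
          refine finset_inf'_concave
            (fun ℓ x => C ℓ + ∫ y, ((1 - x) * f₀ ℓ y + x * f₁ ℓ y) *
              Gseq n (x * f₁ ℓ y / ((1 - x) * f₀ ℓ y + x * f₁ ℓ y)) ∂μ) _ hne
            fun ℓ _ => ?_
          have hI := integral_perspective_concave (hm0 ℓ) (hm1 ℓ) (h0nn ℓ) (h1nn ℓ)
            (hi0 ℓ) (hi1 ℓ) ihm habs ihc
          have heq : (fun x => C ℓ + ∫ y, ((1 - x) * f₀ ℓ y + x * f₁ ℓ y) *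
              Gseq n (x * f₁ ℓ y / ((1 - x) * f₀ ℓ y + x * f₁ ℓ y)) ∂μ)
              = fun x => (∫ y, ((1 - x) * f₀ ℓ y + x * f₁ ℓ y) *
                Gseq n (x * f₁ ℓ y / ((1 - x) * f₀ ℓ y + x * f₁ ℓ y)) ∂μ) + C ℓ :=
            funext fun x => add_comm _ _
          show ConcaveOn ℝ (Icc (0:ℝ) 1) fun x => C ℓ + ∫ y, ((1 - x) * f₀ ℓ y + x * f₁ ℓ y) *
            Gseq n (x * f₁ ℓ y / ((1 - x) * f₀ ℓ y + x * f₁ ℓ y)) ∂μ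
          rw [heq]
          exact hI.add (concaveOn_const _ (convex_Icc 0 1))
        refine ⟨?_, ?_, ?_⟩
        · exact hφm.min (finset_inf'_measurable _ _ hne fun ℓ _ =>
            measurable_const.add (integral_param_measurable μ (hm0 ℓ) (hm1 ℓ) ihm))
        · exact hφc.inf hinfc
        · intro p hp
          constructor
          · refine le_min (hφnn p hp) (Finset.le_inf' hne _ fun ℓ _ => ?_)
            have hint : 0 ≤ ∫ y, ((1 - p) * f₀ ℓ y + p * f₁ ℓ y) *
                Gseq n (p * f₁ ℓ y / ((1 - p) * f₀ ℓ y + p * f₁ ℓ y)) ∂μ := by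
              refine integral_nonneg fun y => ?_
              exact mul_nonneg (add_nonneg (mul_nonneg (by linarith [hp.2]) (h0nn ℓ y))
                (mul_nonneg hp.1 (h1nn ℓ y)))
                (ihb _ (post_mem_Icc (h0nn ℓ y) (h1nn ℓ y) hp)).1
            linarith [hC ℓ]
          · exact (min_le_left _ _).trans (hφle p hp)
  have habs : ∀ n, ∀ p ∈ Icc (0:ℝ) 1, |Gseq n p| ≤ μ₁ := fun n p hp => by
    rw [abs_of_nonneg ((key n).2.2 p hp).1]; exact ((key n).2.2 p hp).2
  -- the sequence is antitone on [0,1]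
  have hmono : ∀ n, ∀ x ∈ Icc (0:ℝ) 1, Gseq (n + 1) x ≤ Gseq n x := by
    intro n
    induction n with
    | zero =>
        intro x hx
        rw [hGsucc 0 x, hG0 x]
        exact min_le_left _ _
    | succ n ih =>
        intro x hx
        rw [hGsucc (n + 1) x, hGsucc n x]
        refine min_le_min (le_refl _) (Finset.le_inf' hne _ fun ℓ hℓ => ?_)
        refine le_trans (Finset.inf'_le _ hℓ) ?_
        have hle : ∫ y, ((1 - x) * f₀ ℓ y + x * f₁ ℓ y) *
            Gseq (n + 1) (x * f₁ ℓ y / ((1 - x) * f₀ ℓ y + x * f₁ ℓ y)) ∂μ ≤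
            ∫ y, ((1 - x) * f₀ ℓ y + x * f₁ ℓ y) *
            Gseq n (x * f₁ ℓ y / ((1 - x) * f₀ ℓ y + x * f₁ ℓ y)) ∂μ := by
          refine integral_mono_of_nonneg ?_
            (integrand_integrable (hm0 ℓ) (hm1 ℓ) (h0nn ℓ) (h1nn ℓ) (hi0 ℓ) (hi1 ℓ)
              (key n).1 (habs n) hx) ?_
          · filter_upwards with y
            exact mul_nonneg (add_nonneg (mul_nonneg (by linarith [hx.2]) (h0nn ℓ y))
              (mul_nonneg hx.1 (h1nn ℓ y)))
              ((key (n+1)).2.2 _ (post_mem_Icc (h0nn ℓ y) (h1nn ℓ y) hx)).1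
          · filter_upwards with y
            exact mul_le_mul_of_nonneg_left
              (ih _ (post_mem_Icc (h0nn ℓ y) (h1nn ℓ y) hx))
              (add_nonneg (mul_nonneg (by linarith [hx.2]) (h0nn ℓ y))
                (mul_nonneg hx.1 (h1nn ℓ y)))
        linarith
  -- the limit function
  set Ginf : ℝ → ℝ := fun x => ⨅ n, Gseq n x with hGinf
  have htend : ∀ x ∈ Icc (0:ℝ) 1, Tendsto (fun n => Gseq n x) atTop (nhds (Ginf x)) := by
    intro x hx
    refine tendsto_atTop_ciInf (antitone_nat_of_succ_le fun n => hmono n x hx) ?_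
    exact ⟨0, fun v ⟨n, hn⟩ => hn ▸ ((key n).2.2 x hx).1⟩
  refine ⟨Ginf, htend, ?_, ?_⟩
  · -- concavity of the limit
    refine ⟨convex_Icc 0 1, fun x hx y hy θ κ hθ hκ hθκ => ?_⟩
    have hz : θ • x + κ • y ∈ Icc (0:ℝ) 1 := (convex_Icc 0 1) hx hy hθ hκ hθκ
    refine le_of_tendsto_of_tendsto'
      (((htend x hx).const_smul θ).add ((htend y hy).const_smul κ))
      (htend _ hz) fun n => ?_
    exact (key n).2.1.2 hx hy hθ hκ hθκ
  · -- fixed-point equation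
    intro x hx
    have hwint : ∀ ℓ : Fin K, Integrable (fun y => (1 - x) * f₀ ℓ y + x * f₁ ℓ y) μ :=
      fun ℓ => ((hi0 ℓ).const_mul _).add ((hi1 ℓ).const_mul _)
    have hwnn : ∀ (ℓ : Fin K) y, 0 ≤ (1 - x) * f₀ ℓ y + x * f₁ ℓ y := fun ℓ y =>
      add_nonneg (mul_nonneg (by linarith [hx.2]) (h0nn ℓ y)) (mul_nonneg hx.1 (h1nn ℓ y))
    have hIlim : ∀ ℓ : Fin K, Tendsto (fun n => ∫ y, ((1 - x) * f₀ ℓ y + x * f₁ ℓ y) *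
        Gseq n (x * f₁ ℓ y / ((1 - x) * f₀ ℓ y + x * f₁ ℓ y)) ∂μ) atTop
        (nhds (∫ y, ((1 - x) * f₀ ℓ y + x * f₁ ℓ y) *
        Ginf (x * f₁ ℓ y / ((1 - x) * f₀ ℓ y + x * f₁ ℓ y)) ∂μ)) := by
      intro ℓ
      refine tendsto_integral_of_dominated_convergence
        (fun y => μ₁ * ((1 - x) * f₀ ℓ y + x * f₁ ℓ y))
        (fun n => (integrand_measurable (hm0 ℓ) (hm1 ℓ) (key n).1 x).aestronglyMeasurable)
        ((hwint ℓ).const_mul μ₁) (fun n => ?_) ?_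
      · filter_upwards with y
        have hp := post_mem_Icc (h0nn ℓ y) (h1nn ℓ y) hx
        rw [norm_mul, Real.norm_eq_abs, Real.norm_eq_abs,
          abs_of_nonneg (hwnn ℓ y)]
        calc ((1 - x) * f₀ ℓ y + x * f₁ ℓ y) *
            |Gseq n (x * f₁ ℓ y / ((1 - x) * f₀ ℓ y + x * f₁ ℓ y))|
            ≤ ((1 - x) * f₀ ℓ y + x * f₁ ℓ y) * μ₁ :=
              mul_le_mul_of_nonneg_left (habs n _ hp) (hwnn ℓ y)
          _ = μ₁ * ((1 - x) * f₀ ℓ y + x * f₁ ℓ y) := mul_comm _ _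
      · filter_upwards with y
        exact (htend _ (post_mem_Icc (h0nn ℓ y) (h1nn ℓ y) hx)).const_mul _
    have hRHS : Tendsto (fun n => Gseq (n + 1) x) atTop (nhds (min (φ x)
        (Finset.univ.inf' hne (fun ℓ => C ℓ + ∫ y, ((1 - x) * f₀ ℓ y + x * f₁ ℓ y) *
          Ginf (x * f₁ ℓ y / ((1 - x) * f₀ ℓ y + x * f₁ ℓ y)) ∂μ)))) := by
      have h1 : Tendsto (fun n => Finset.univ.inf' hne
          (fun ℓ => C ℓ + ∫ y, ((1 - x) * f₀ ℓ y + x * f₁ ℓ y) *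
            Gseq n (x * f₁ ℓ y / ((1 - x) * f₀ ℓ y + x * f₁ ℓ y)) ∂μ)) atTop
          (nhds (Finset.univ.inf' hne
          (fun ℓ => C ℓ + ∫ y, ((1 - x) * f₀ ℓ y + x * f₁ ℓ y) *
            Ginf (x * f₁ ℓ y / ((1 - x) * f₀ ℓ y + x * f₁ ℓ y)) ∂μ))) :=
        finset_inf'_tendsto _ _ _ hne fun ℓ _ => (tendsto_const_nhds).add (hIlim ℓ)
      have h2 := (tendsto_const_nhds (x := φ x) (f := atTop (α := ℕ))).min h1
      simpa [hGsucc] using h2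
    have hLHS : Tendsto (fun n => Gseq (n + 1) x) atTop (nhds (Ginf x)) :=
      (htend x hx).comp (tendsto_add_atTop_nat 1)
    exact tendsto_nhds_unique hLHS hRHS
end
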